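/- arXiv:1301.1182 — 5 statements merged into one kernel-verified Lean document; each statement's English description precedes it below -/
import Mathlib

section
/- Let Φ be ψ-irreducible and let r ∈ Λ. (1) If there exists a set A ∈ B+(X) such that Σ_{n≥1} r(n) P^n(x,A) < ∞ for every x ∈ A, then there exist sets D and A_i, i ≥ 1, such that X = D ∪ (∪_{i≥1} A_i), ψ(D) = 0, and sup_{x∈A_i} Σ_{n≥1} r(n) P^n(x,A_i) < ∞ for every i. (2) If there exists a set A ∈ B+(X) such that sup_{x∈X} Σ_{n≥1} r(n) P^n(x,A) < ∞, then there exist sets A_i, i ≥ 1, with X = ∪_{i≥1} A_i and sup_{x∈X} Σ_{n≥1} r(n) P^n(x,A_i) < ∞ for every i. -/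
open MeasureTheory ProbabilityTheory
open scoped ENNReal NNReal Classical

namespace MarkovTransience

variable {X : Type*} [MeasurableSpace X]

/-- `iterP P n x A` is the `n`-step transition probability `P^n(x, A)`. -/
noncomputable def iterP (P : Kernel X X) : ℕ → X → Set X → ℝ≥0∞
  | 0 => fun x A => A.indicator (fun _ => 1) x
  | n + 1 => fun x A => ∫⁻ y, iterP P n y A ∂(P x)

/-- `retF P A n x` is `F^n(x, A) = P_x(τ_A = n)`, the probability that the first
return to `A` happens at time `n`. -/
noncomputable def retF (P : Kernel X X) (A : Set X) : ℕ → X → ℝ≥0∞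
  | 0 => fun _ => 0
  | 1 => fun x => P x A
  | n + 2 => fun x => ∫⁻ y in Aᶜ, retF P A (n + 1) y ∂(P x)

/-- `retL P A x = L(x, A) = P_x(τ_A < ∞)`. -/
noncomputable def retL (P : Kernel X X) (A : Set X) (x : X) : ℝ≥0∞ :=
  ∑' n, retF P A n x

/-- `retE P A r x = E_x[r(τ_A) 1_{τ_A < ∞}]`. -/
noncomputable def retE (P : Kernel X X) (A : Set X) (r : ℕ → ℝ≥0∞) (x : X) : ℝ≥0∞ :=
  ∑' n, r n * retF P A n x

/-- `hitE P A r x = E_x[r(σ_A) 1_{σ_A < ∞}]`, `σ_A` the first hitting time. -/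
noncomputable def hitE (P : Kernel X X) (A : Set X) (r : ℕ → ℝ≥0∞) (x : X) : ℝ≥0∞ :=
  if x ∈ A then r 0 else retE P A r x

/-- `act P W x = PW(x) = ∫ W(y) P(x, dy)`. -/
noncomputable def act (P : Kernel X X) (W : X → ℝ≥0∞) (x : X) : ℝ≥0∞ :=
  ∫⁻ y, W y ∂(P x)

/-- `ψ`-irreducibility: `ψ` is a nontrivial σ-finite measure such that every set of
positive `ψ`-measure is reached with positive probability from every starting point. -/
def IsIrreducibility (P : Kernel X X) (ψ : Measure X) : Prop :=
  ψ ≠ 0 ∧ SigmaFinite ψ ∧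
    ∀ A : Set X, MeasurableSet A → 0 < ψ A → ∀ x, 0 < ∑' n, iterP P (n + 1) x A

/-- `ψ` is a maximal irreducibility measure for `P`. -/
def IsMaxIrreducibility (P : Kernel X X) (ψ : Measure X) : Prop :=
  IsIrreducibility P ψ ∧ ∀ ψ' : Measure X, IsIrreducibility P ψ' → ψ' ≪ ψ

/-- `A ∈ B⁺(X)`: a measurable set of positive `ψ`-measure. -/
def InBPlus (ψ : Measure X) (A : Set X) : Prop :=
  MeasurableSet A ∧ 0 < ψ A

/-- A petite set. -/
def PetiteSet (P : Kernel X X) (A : Set X) : Prop :=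
  ∃ (a : ℕ → ℝ≥0∞) (ν : Measure X), (∑' n, a n) = 1 ∧ ν ≠ 0 ∧
    ∀ x ∈ A, ∀ B : Set X, MeasurableSet B → ν B ≤ ∑' n, a n * iterP P (n + 1) x B

/-- The chain is transient. -/
def Transient (P : Kernel X X) (ψ : Measure X) : Prop :=
  IsMaxIrreducibility P ψ ∧
    ∃ A : ℕ → Set X, (⋃ i, A i) = Set.univ ∧
      ∀ i, InBPlus ψ (A i) ∧ (⨆ x ∈ A i, ∑' n, iterP P (n + 1) x (A i)) < ⊤

/-- A uniformly geometric transient set. -/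
def UnifGeomTransientSet (P : Kernel X X) (A : Set X) : Prop :=
  ∃ κ : ℝ≥0, 1 < κ ∧ (⨆ x ∈ A, ∑' n, (κ : ℝ≥0∞) ^ (n + 1) * iterP P (n + 1) x A) < ⊤

/-- The chain is geometrically transient. -/
def GeomTransient (P : Kernel X X) (ψ : Measure X) : Prop :=
  IsMaxIrreducibility P ψ ∧
    ∃ (D : Set X) (A : ℕ → Set X), ψ D = 0 ∧ D ∪ (⋃ i, A i) = Set.univ ∧
      ∀ i, InBPlus ψ (A i) ∧ UnifGeomTransientSet P (A i)

/-- A uniformly `ℓ`-transient set. -/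
def UnifAlgTransientSet (P : Kernel X X) (ℓ : ℕ) (A : Set X) : Prop :=
  (⨆ x ∈ A, ∑' n, ((n + 1 : ℕ) : ℝ≥0∞) ^ ℓ * iterP P (n + 1) x A) < ⊤

/-- The chain is algebraically (`ℓ`-)transient. -/
def AlgTransient (P : Kernel X X) (ψ : Measure X) (ℓ : ℕ) : Prop :=
  IsMaxIrreducibility P ψ ∧
    ∃ (D : Set X) (A : ℕ → Set X), ψ D = 0 ∧ D ∪ (⋃ i, A i) = Set.univ ∧
      ∀ i, InBPlus ψ (A i) ∧ UnifAlgTransientSet P ℓ (A i)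

/-- `lifeDist P x n = P_x(τ = n)` where `τ = sup{n : Φ_n ∈ X}` is the lifetime of the
(sub-stochastic) chain, so that `P_x(τ = n) = P^n(x, X) - P^{n+1}(x, X)`. -/
noncomputable def lifeDist (P : Kernel X X) (x : X) (n : ℕ) : ℝ≥0∞ :=
  iterP P n x Set.univ - iterP P (n + 1) x Set.univ

/-- `lifeE P r x = E_x[r(τ)]` for the lifetime `τ` (on the event `τ < ∞`). -/
noncomputable def lifeE (P : Kernel X X) (r : ℕ → ℝ≥0∞) (x : X) : ℝ≥0∞ :=
  ∑' n, r n * lifeDist P x n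

/-- The family `Λ` of normalized increasing submultiplicative rate functions. -/
def InLambda (r : ℕ → ℝ≥0) : Prop :=
  Monotone r ∧ r 0 = 1 ∧ (∀ n, 1 ≤ r n) ∧ ∀ m n, r (m + n) ≤ r m * r n

noncomputable def QM (P : Kernel X X) : ℕ → X → Measure X
  | 0 => fun x => Measure.dirac x
  | n + 1 => fun x => (P x).bind (QM P n)

lemma measurable_QM (P : Kernel X X) (n : ℕ) : Measurable (QM P n) := by
  induction n with
  | zero => exact Measure.measurable_dirac
  | succ n ih => exact (Measure.measurable_bind' ih).comp P.measurable

lemma iterP_eq (P : Kernel X X) (n : ℕ) (x : X) {A : Set X} (hA : MeasurableSet A) :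
    iterP P n x A = QM P n x A := by
  induction n generalizing x with
  | zero =>
      show A.indicator (fun _ => 1) x = Measure.dirac x A
      rw [Measure.dirac_apply' _ hA]; rfl
  | succ n ih =>
      show (∫⁻ y, iterP P n y A ∂(P x)) = ((P x).bind (QM P n)) A
      rw [Measure.bind_apply hA (measurable_QM P n).aemeasurable]
      exact lintegral_congr fun y => ih y

lemma QM_add (P : Kernel X X) (k l : ℕ) (x : X) :
    QM P (k + l) x = (QM P k x).bind (QM P l) := by
  induction k generalizing x with
  | zero =>
      rw [Nat.zero_add]
      show QM P l x = (Measure.dirac x).bind (QM P l)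
      rw [Measure.dirac_bind (measurable_QM P l)]
  | succ k ih =>
      have h1 : k + 1 + l = (k + l) + 1 := by omega
      rw [h1]
      show (P x).bind (QM P (k + l)) = ((P x).bind (QM P k)).bind (QM P l)
      rw [Measure.bind_bind (measurable_QM P k).aemeasurable (measurable_QM P l).aemeasurable]
      exact congrArg _ (funext fun y => ih y)

lemma iterP_add_apply (P : Kernel X X) (k l : ℕ) (x : X) {A : Set X} (hA : MeasurableSet A) :
    iterP P (k + l) x A = ∫⁻ y, iterP P l y A ∂(QM P k x) := by
  rw [iterP_eq P _ x hA, QM_add, Measure.bind_apply hA (measurable_QM P l).aemeasurable]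
  exact lintegral_congr fun y => (iterP_eq P l y hA).symm

lemma measurable_iterP (P : Kernel X X) (n : ℕ) {A : Set X} (hA : MeasurableSet A) :
    Measurable fun x => iterP P n x A := by
  have h : (fun x => iterP P n x A) = fun x => QM P n x A := funext fun x => iterP_eq P n x hA
  rw [h]
  exact (Measure.measurable_coe hA).comp (measurable_QM P n)

lemma iterP_mono (P : Kernel X X) (n : ℕ) (x : X) {A B : Set X} (h : A ⊆ B) :
    iterP P n x A ≤ iterP P n x B := by
  induction n generalizing x with
  | zero =>
      show A.indicator (fun _ => 1) x ≤ B.indicator (fun _ => 1) x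
      by_cases hx : x ∈ A
      · rw [Set.indicator_of_mem hx, Set.indicator_of_mem (h hx)]
      · rw [Set.indicator_of_notMem hx]; exact zero_le
  | succ n ih => exact lintegral_mono fun y => ih y

noncomputable def Gfun (P : Kernel X X) (r : ℕ → ℝ≥0) (C : Set X) (x : X) : ℝ≥0∞ :=
  ∑' n, (r (n + 1) : ℝ≥0∞) * iterP P (n + 1) x C

lemma measurable_Gfun (P : Kernel X X) (r : ℕ → ℝ≥0) {C : Set X} (hC : MeasurableSet C) :
    Measurable (Gfun P r C) :=
  Measurable.ennreal_tsum fun n => measurable_const.mul (measurable_iterP P (n + 1) hC)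

lemma Gfun_mono_set (P : Kernel X X) (r : ℕ → ℝ≥0) {C A : Set X} (h : C ⊆ A) (x : X) :
    Gfun P r C x ≤ Gfun P r A x :=
  ENNReal.tsum_le_tsum fun n => mul_le_mul_right (iterP_mono P (n + 1) x h) _

lemma G_shift_le (P : Kernel X X) {r : ℕ → ℝ≥0} (hrmono : Monotone r) (C : Set X)
    (k : ℕ) (x : X) :
    ∑' n, (r (n + 1) : ℝ≥0∞) * iterP P (k + (n + 1)) x C ≤ Gfun P r C x := by
  calc ∑' n, (r (n + 1) : ℝ≥0∞) * iterP P (k + (n + 1)) x C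
      ≤ ∑' n, (fun m => (r (m + 1) : ℝ≥0∞) * iterP P (m + 1) x C) (k + n) := by
        refine ENNReal.tsum_le_tsum fun n => ?_
        simp only
        have he : k + (n + 1) = (k + n) + 1 := by omega
        rw [he]
        exact mul_le_mul_left (by exact_mod_cast hrmono (by omega : n + 1 ≤ k + n + 1)) _
    _ ≤ ∑' m, (r (m + 1) : ℝ≥0∞) * iterP P (m + 1) x C :=
        ENNReal.summable.tsum_le_tsum_of_inj (fun n => k + n) (add_right_injective k)
          (fun c _ => zero_le) (fun n => le_rfl) ENNReal.summable
    _ = Gfun P r C x := rfl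

lemma setLIntegral_G_le (P : Kernel X X) {r : ℕ → ℝ≥0} (hrmono : Monotone r)
    {C : Set X} (hC : MeasurableSet C) (S : Set X) (k : ℕ) (x : X) :
    ∫⁻ y in S, Gfun P r C y ∂(QM P k x) ≤ Gfun P r C x := by
  calc ∫⁻ y in S, Gfun P r C y ∂(QM P k x)
      = ∑' n, ∫⁻ y in S, (r (n + 1) : ℝ≥0∞) * iterP P (n + 1) y C ∂(QM P k x) :=
        lintegral_tsum fun n =>
          (measurable_const.mul (measurable_iterP P (n + 1) hC)).aemeasurable
    _ ≤ ∑' n, (r (n + 1) : ℝ≥0∞) * iterP P (k + (n + 1)) x C := by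
        refine ENNReal.tsum_le_tsum fun n => ?_
        calc ∫⁻ y in S, (r (n + 1) : ℝ≥0∞) * iterP P (n + 1) y C ∂(QM P k x)
            ≤ ∫⁻ y, (r (n + 1) : ℝ≥0∞) * iterP P (n + 1) y C ∂(QM P k x) :=
              setLIntegral_le_lintegral _ _
          _ = (r (n + 1) : ℝ≥0∞) * ∫⁻ y, iterP P (n + 1) y C ∂(QM P k x) :=
              lintegral_const_mul _ (measurable_iterP P (n + 1) hC)
          _ = (r (n + 1) : ℝ≥0∞) * iterP P (k + (n + 1)) x C := by
              rw [iterP_add_apply P k (n + 1) x hC]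
    _ ≤ Gfun P r C x := G_shift_le P hrmono C k x

lemma main_bound (P : Kernel X X) {r : ℕ → ℝ≥0} (hrmono : Monotone r)
    {C T : Set X} (hC : MeasurableSet C) (hT : MeasurableSet T)
    (j : ℕ) (hj : j ≠ 0)
    (hT' : ∀ y ∈ T, ((j : ℝ≥0∞))⁻¹ ≤ ∑ m ∈ Finset.range j, iterP P (m + 1) y C)
    (x : X) :
    Gfun P r T x ≤ j * (j * Gfun P r C x) := by
  have hmeas : ∀ m ∈ Finset.range j, Measurable fun y => iterP P (m + 1) y C :=
    fun m _ => measurable_iterP P (m + 1) hC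
  have step1 : ∀ n : ℕ, ((j : ℝ≥0∞))⁻¹ * iterP P (n + 1) x T ≤
      ∑ m ∈ Finset.range j, iterP P ((n + 1) + (m + 1)) x C := by
    intro n
    calc ((j : ℝ≥0∞))⁻¹ * iterP P (n + 1) x T
        = ((j : ℝ≥0∞))⁻¹ * (QM P (n + 1) x) T := by rw [iterP_eq P (n + 1) x hT]
      _ = ∫⁻ _ in T, ((j : ℝ≥0∞))⁻¹ ∂(QM P (n + 1) x) := (setLIntegral_const T _).symm
      _ ≤ ∫⁻ y in T, ∑ m ∈ Finset.range j, iterP P (m + 1) y C ∂(QM P (n + 1) x) :=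
          setLIntegral_mono (Finset.measurable_sum _ hmeas) hT'
      _ = ∑ m ∈ Finset.range j, ∫⁻ y in T, iterP P (m + 1) y C ∂(QM P (n + 1) x) :=
          lintegral_finset_sum _ hmeas
      _ ≤ ∑ m ∈ Finset.range j, ∫⁻ y, iterP P (m + 1) y C ∂(QM P (n + 1) x) :=
          Finset.sum_le_sum fun m _ => setLIntegral_le_lintegral _ _
      _ = ∑ m ∈ Finset.range j, iterP P ((n + 1) + (m + 1)) x C := by
          exact Finset.sum_congr rfl fun m _ => (iterP_add_apply P (n + 1) (m + 1) x hC).symm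
  have step2 : ((j : ℝ≥0∞))⁻¹ * Gfun P r T x ≤ (j : ℝ≥0∞) * Gfun P r C x := by
    calc ((j : ℝ≥0∞))⁻¹ * Gfun P r T x
        = ∑' n, (r (n + 1) : ℝ≥0∞) * (((j : ℝ≥0∞))⁻¹ * iterP P (n + 1) x T) := by
          rw [Gfun, ← ENNReal.tsum_mul_left]
          exact tsum_congr fun n => by ring
      _ ≤ ∑' n, (r (n + 1) : ℝ≥0∞) * ∑ m ∈ Finset.range j, iterP P ((n + 1) + (m + 1)) x C :=
          ENNReal.tsum_le_tsum fun n => mul_le_mul_right (step1 n) _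
      _ = ∑' n, ∑ m ∈ Finset.range j, (r (n + 1) : ℝ≥0∞) * iterP P ((n + 1) + (m + 1)) x C :=
          tsum_congr fun n => Finset.mul_sum _ _ _
      _ = ∑ m ∈ Finset.range j, ∑' n, (r (n + 1) : ℝ≥0∞) * iterP P ((n + 1) + (m + 1)) x C :=
          Summable.tsum_finsetSum fun m _ => ENNReal.summable
      _ ≤ ∑ m ∈ Finset.range j, Gfun P r C x := by
          refine Finset.sum_le_sum fun m _ => ?_
          refine le_trans (le_of_eq (tsum_congr fun n => ?_)) (G_shift_le P hrmono C (m + 1) x)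
          rw [add_comm (n + 1) (m + 1)]
      _ = (j : ℝ≥0∞) * Gfun P r C x := by
          rw [Finset.sum_const, Finset.card_range, nsmul_eq_mul]
  have hjj : (j : ℝ≥0∞) * ((j : ℝ≥0∞))⁻¹ = 1 :=
    ENNReal.mul_inv_cancel (Nat.cast_ne_zero.mpr hj) (ENNReal.natCast_ne_top j)
  calc Gfun P r T x = (j : ℝ≥0∞) * (((j : ℝ≥0∞))⁻¹ * Gfun P r T x) := by
        rw [← mul_assoc, hjj, one_mul]
    _ ≤ (j : ℝ≥0∞) * ((j : ℝ≥0∞) * Gfun P r C x) := mul_le_mul_right step2 _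


theorem countable_cover_by_uniformly_r_transient_sets
    {X : Type*} [MeasurableSpace X] [MeasurableSpace.CountablyGenerated X]
    (P : Kernel X X) (hP : ∀ x, P x Set.univ ≤ 1) (ψ : Measure X)
    (hψ : IsMaxIrreducibility P ψ) (r : ℕ → ℝ≥0) (hr : InLambda r) :
    ((∃ A : Set X, InBPlus ψ A ∧
        ∀ x ∈ A, (∑' n, (r (n + 1) : ℝ≥0∞) * iterP P (n + 1) x A) < ⊤) →
      ∃ (D : Set X) (As : ℕ → Set X), Set.univ = D ∪ (⋃ i, As i) ∧ ψ D = 0 ∧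
        ∀ i, (⨆ x ∈ As i, ∑' n, (r (n + 1) : ℝ≥0∞) * iterP P (n + 1) x (As i)) < ⊤) ∧
    ((∃ A : Set X, InBPlus ψ A ∧
        (⨆ x, ∑' n, (r (n + 1) : ℝ≥0∞) * iterP P (n + 1) x A) < ⊤) →
      ∃ As : ℕ → Set X, Set.univ = ⋃ i, As i ∧
        ∀ i, (⨆ x, ∑' n, (r (n + 1) : ℝ≥0∞) * iterP P (n + 1) x (As i)) < ⊤) := by
  obtain ⟨⟨hψne, hψsig, hirr⟩, -⟩ := hψ
  obtain ⟨hrmono, hr0, hr1, hrsub⟩ := hr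
  constructor
  · rintro ⟨A, ⟨hAm, hAψ⟩, hAfin⟩
    obtain ⟨m, hm⟩ : ∃ m : ℕ, 0 < ψ (A ∩ {x | Gfun P r A x ≤ (m : ℝ≥0∞)}) := by
      by_contra hcon
      push_neg at hcon
      have hsub : A ⊆ ⋃ m : ℕ, A ∩ {x | Gfun P r A x ≤ (m : ℝ≥0∞)} := by
        intro x hx
        obtain ⟨n, hn⟩ := ENNReal.exists_nat_gt (hAfin x hx).ne
        exact Set.mem_iUnion.mpr ⟨n, hx, hn.le⟩
      have h0 : ψ A = 0 :=
        measure_mono_null hsub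
          (measure_iUnion_null fun m => le_zero_iff.mp (hcon m))
      exact absurd h0 hAψ.ne'
    have hCmeas : MeasurableSet (A ∩ {x | Gfun P r A x ≤ (m : ℝ≥0∞)}) :=
      hAm.inter (measurable_Gfun P r hAm measurableSet_Iic)
    set C := A ∩ {x | Gfun P r A x ≤ (m : ℝ≥0∞)} with hCdef
    have hGC : ∀ x ∈ C, Gfun P r C x ≤ (m : ℝ≥0∞) := fun x hx =>
      le_trans (Gfun_mono_set P r Set.inter_subset_left x) hx.2
    have hDmeas : MeasurableSet {x | Gfun P r C x = ⊤} :=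
      measurable_Gfun P r hCmeas (measurableSet_singleton ⊤)
    have hD0 : ψ {x | Gfun P r C x = ⊤} = 0 := by
      by_contra hD
      obtain ⟨x0, hx0⟩ : C.Nonempty := nonempty_of_measure_ne_zero hm.ne'
      have h1 := hirr _ hDmeas (pos_iff_ne_zero.mpr hD) x0
      obtain ⟨k, hk⟩ : ∃ k, iterP P (k + 1) x0 {x | Gfun P r C x = ⊤} ≠ 0 := by
        by_contra h; push_neg at h
        rw [ENNReal.tsum_eq_zero.mpr h] at h1; exact lt_irrefl 0 h1
      have hμD : QM P (k + 1) x0 {x | Gfun P r C x = ⊤} ≠ 0 := by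
        rw [← iterP_eq P (k + 1) x0 hDmeas]; exact hk
      have htop : Gfun P r C x0 = ⊤ := by
        refine top_le_iff.mp ?_
        calc (⊤ : ℝ≥0∞) = ⊤ * QM P (k + 1) x0 {x | Gfun P r C x = ⊤} :=
              (ENNReal.top_mul hμD).symm
          _ = ∫⁻ _ in {x | Gfun P r C x = ⊤}, ⊤ ∂(QM P (k + 1) x0) :=
              (setLIntegral_const _ ⊤).symm
          _ = ∫⁻ y in {x | Gfun P r C x = ⊤}, Gfun P r C y ∂(QM P (k + 1) x0) :=
              setLIntegral_congr_fun hDmeas (fun y hy => hy.symm)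
          _ ≤ Gfun P r C x0 := setLIntegral_G_le P hrmono hCmeas _ (k + 1) x0
      have h2 := hGC x0 hx0
      rw [htop] at h2
      exact (ENNReal.natCast_ne_top m) (top_le_iff.mp h2)
    refine ⟨{x | Gfun P r C x = ⊤},
      fun i => {x | Gfun P r C x ≤ ((i + 1 : ℕ) : ℝ≥0∞) ∧
        (((i + 1 : ℕ) : ℝ≥0∞))⁻¹ ≤ ∑ m' ∈ Finset.range (i + 1), iterP P (m' + 1) x C},
      ?_, hD0, ?_⟩
    · refine (Set.eq_univ_of_forall fun x => ?_).symm
      by_cases hx : Gfun P r C x = ⊤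
      · exact Or.inl hx
      · obtain ⟨j1, hj1⟩ := ENNReal.exists_nat_gt hx
        have h1 := hirr C hCmeas hm x
        obtain ⟨N, hN⟩ : ∃ N, iterP P (N + 1) x C ≠ 0 := by
          by_contra h; push_neg at h
          rw [ENNReal.tsum_eq_zero.mpr h] at h1; exact lt_irrefl 0 h1
        obtain ⟨j2, hj2⟩ := ENNReal.exists_inv_nat_lt hN
        refine Or.inr (Set.mem_iUnion.mpr ⟨max j1 (max N j2), ?_, ?_⟩)
        · exact le_trans hj1.le (Nat.cast_le.mpr (by omega))
        · calc (((max j1 (max N j2) + 1 : ℕ) : ℝ≥0∞))⁻¹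
              ≤ ((j2 : ℕ) : ℝ≥0∞)⁻¹ := by
                apply ENNReal.inv_le_inv.mpr
                exact_mod_cast (by omega : j2 ≤ max j1 (max N j2) + 1)
            _ ≤ iterP P (N + 1) x C := hj2.le
            _ ≤ ∑ m' ∈ Finset.range (max j1 (max N j2) + 1), iterP P (m' + 1) x C :=
                Finset.single_le_sum (f := fun m' => iterP P (m' + 1) x C)
                  (fun i _ => zero_le)
                  (Finset.mem_range.mpr (by omega : N < max j1 (max N j2) + 1))
    · intro i
      have hTmeas : MeasurableSet {x | Gfun P r C x ≤ ((i + 1 : ℕ) : ℝ≥0∞) ∧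
          (((i + 1 : ℕ) : ℝ≥0∞))⁻¹ ≤ ∑ m' ∈ Finset.range (i + 1), iterP P (m' + 1) x C} :=
        (measurable_Gfun P r hCmeas measurableSet_Iic).inter
          ((Finset.measurable_sum _ fun m' _ => measurable_iterP P (m' + 1) hCmeas)
            measurableSet_Ici)
      refine lt_of_le_of_lt (iSup₂_le fun x hx => ?_)
        (?_ : ((i + 1 : ℕ) : ℝ≥0∞) * ((i + 1 : ℕ) * ((i + 1 : ℕ) : ℝ≥0∞)) < ⊤)
      · calc Gfun P r _ x
            ≤ ((i + 1 : ℕ) : ℝ≥0∞) * ((i + 1 : ℕ) * Gfun P r C x) :=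
              main_bound P hrmono hCmeas hTmeas (i + 1) (Nat.succ_ne_zero i)
                (fun y hy => hy.2) x
          _ ≤ ((i + 1 : ℕ) : ℝ≥0∞) * ((i + 1 : ℕ) * ((i + 1 : ℕ) : ℝ≥0∞)) := by
              gcongr
              exact hx.1
      · exact ENNReal.mul_lt_top (ENNReal.natCast_lt_top _)
          (ENNReal.mul_lt_top (ENNReal.natCast_lt_top _) (ENNReal.natCast_lt_top _))
  · rintro ⟨A, ⟨hAm, hAψ⟩, hAsup⟩
    refine ⟨fun i => {x |
        (((i + 1 : ℕ) : ℝ≥0∞))⁻¹ ≤ ∑ m' ∈ Finset.range (i + 1), iterP P (m' + 1) x A},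
      ?_, ?_⟩
    · refine (Set.eq_univ_of_forall fun x => ?_).symm
      have h1 := hirr A hAm hAψ x
      obtain ⟨N, hN⟩ : ∃ N, iterP P (N + 1) x A ≠ 0 := by
        by_contra h; push_neg at h
        rw [ENNReal.tsum_eq_zero.mpr h] at h1; exact lt_irrefl 0 h1
      obtain ⟨j2, hj2⟩ := ENNReal.exists_inv_nat_lt hN
      refine Set.mem_iUnion.mpr ⟨max N j2, ?_⟩
      calc (((max N j2 + 1 : ℕ) : ℝ≥0∞))⁻¹
          ≤ ((j2 : ℕ) : ℝ≥0∞)⁻¹ := by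
            apply ENNReal.inv_le_inv.mpr
            exact_mod_cast (by omega : j2 ≤ max N j2 + 1)
        _ ≤ iterP P (N + 1) x A := hj2.le
        _ ≤ ∑ m' ∈ Finset.range (max N j2 + 1), iterP P (m' + 1) x A :=
            Finset.single_le_sum (f := fun m' => iterP P (m' + 1) x A)
              (fun i _ => zero_le)
              (Finset.mem_range.mpr (by omega : N < max N j2 + 1))
    · intro i
      have hTmeas : MeasurableSet {x |
          (((i + 1 : ℕ) : ℝ≥0∞))⁻¹ ≤ ∑ m' ∈ Finset.range (i + 1), iterP P (m' + 1) x A} :=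
        (Finset.measurable_sum _ fun m' _ => measurable_iterP P (m' + 1) hAm)
          measurableSet_Ici
      refine lt_of_le_of_lt (iSup_le fun x => ?_)
        (?_ : ((i + 1 : ℕ) : ℝ≥0∞) * ((i + 1 : ℕ) *
          (⨆ x, ∑' n, (r (n + 1) : ℝ≥0∞) * iterP P (n + 1) x A)) < ⊤)
      · calc Gfun P r _ x
            ≤ ((i + 1 : ℕ) : ℝ≥0∞) * ((i + 1 : ℕ) * Gfun P r A x) :=
              main_bound P hrmono hAm hTmeas (i + 1) (Nat.succ_ne_zero i)
                (fun y hy => hy) x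
          _ ≤ _ := by
              gcongr
              exact le_iSup (fun x => Gfun P r A x) x
      · exact ENNReal.mul_lt_top (ENNReal.natCast_lt_top _)
          (ENNReal.mul_lt_top (ENNReal.natCast_lt_top _) hAsup)

end MarkovTransience
end

section
/- Let r ∈ Λ and set r̂(n) = Σ_{k=0}^{n} r(k). Let A ∈ B+(X). Then the function g*(x) := E_x[r̂(τ_A) 1_{τ_A<∞}] is the minimal nonnegative solution of the equation g(x) = ∫_{A^c} g(y) P(x,dy) + P(x,A) + E_x[r(τ_A) 1_{τ_A<∞}] for x ∈ X; that is, g* satisfies this equation and every nonnegative measurable solution g of the equation satisfies g(x) ≥ g*(x) for all x. -/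
open MeasureTheory ProbabilityTheory
open scoped ENNReal NNReal Classical

namespace MarkovTransience

variable {X : Type*} [MeasurableSpace X]

section MinimalSolutionAux

variable {X : Type*} [MeasurableSpace X] (P : Kernel X X) (A : Set X)

lemma meas_lint_kernel {f : X → ℝ≥0∞} (hf : Measurable f) :
    Measurable fun x => ∫⁻ y, f y ∂(P x) := by
  have h : ∀ x, ∫⁻ y, f y ∂(P x)
      = ⨆ n, (SimpleFunc.eapprox f n).lintegral (P x) := fun x =>
    lintegral_eq_iSup_eapprox_lintegral hf
  simp_rw [h]
  refine Measurable.iSup fun n => ?_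
  simp_rw [SimpleFunc.lintegral]
  refine Finset.measurable_sum _ fun c _ => ?_
  exact (P.measurable_coe ((SimpleFunc.eapprox f n).measurableSet_preimage _)).const_mul c

lemma meas_setLint_kernel (hA : MeasurableSet A) {f : X → ℝ≥0∞} (hf : Measurable f) :
    Measurable fun x => ∫⁻ y in Aᶜ, f y ∂(P x) := by
  simp_rw [← lintegral_indicator hA.compl]
  exact meas_lint_kernel P (hf.indicator hA.compl)

lemma retF_zero (x : X) : retF P A 0 x = 0 := rfl
lemma retF_one (x : X) : retF P A 1 x = P x A := rfl
lemma retF_step (n : ℕ) (x : X) :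
    retF P A (n + 2) x = ∫⁻ y in Aᶜ, retF P A (n + 1) y ∂(P x) := rfl

lemma measurable_retF (hA : MeasurableSet A) : ∀ n, Measurable (retF P A n)
  | 0 => measurable_const
  | 1 => P.measurable_coe hA
  | (n + 2) => meas_setLint_kernel P A hA (measurable_retF hA (n + 1))

/-- The iterates `T^k c` where `c(x) = P(x,A) + E_x[r(τ_A)1_{τ_A<∞}]`. -/
noncomputable def cseq (r : ℕ → ℝ≥0) (k : ℕ) (x : X) : ℝ≥0∞ :=
  retF P A (k + 1) x + ∑' n, (r (n + 1) : ℝ≥0∞) * retF P A (n + k + 1) x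

lemma measurable_cseq (hA : MeasurableSet A) (r : ℕ → ℝ≥0) (k : ℕ) :
    Measurable (cseq P A r k) :=
  (measurable_retF P A hA _).add
    (Measurable.ennreal_tsum fun _ => (measurable_retF P A hA _).const_mul _)

lemma lint_cseq (hA : MeasurableSet A) (r : ℕ → ℝ≥0) (k : ℕ) (x : X) :
    ∫⁻ y in Aᶜ, cseq P A r k y ∂(P x) = cseq P A r (k + 1) x := by
  unfold cseq
  rw [lintegral_add_left (measurable_retF P A hA _),
    lintegral_tsum fun n => ((measurable_retF P A hA _).const_mul _).aemeasurable]
  simp_rw [lintegral_const_mul _ (measurable_retF P A hA _)]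
  refine congrArg₂ (· + ·) (retF_step P A k x).symm (tsum_congr fun n => ?_)
  rw [show n + (k + 1) + 1 = (n + k) + 2 from by omega, retF_step]

lemma tsum_shift_mul (a b : ℕ → ℝ≥0∞) :
    ∑' k, ∑' n, a n * b (n + k) = ∑' m, (∑ j ∈ Finset.range (m + 1), a j) * b m := by
  classical
  set f : ℕ × ℕ → ℝ≥0∞ := fun q => if q.2 ≤ q.1 then a q.2 * b q.1 else 0 with hf
  set i : ℕ × ℕ → ℕ × ℕ := fun p => (p.2 + p.1, p.2) with hi
  have hinj : Function.Injective i := by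
    intro p q h
    simp only [hi, Prod.mk.injEq] at h
    exact Prod.ext (by omega) h.2
  have hsupp : Function.support f ⊆ Set.range i := by
    intro q hq
    rw [Function.mem_support] at hq
    by_cases h : q.2 ≤ q.1
    · exact ⟨(q.1 - q.2, q.2), by simp only [hi]; exact Prod.ext (by omega) rfl⟩
    · simp [hf, h] at hq
  have h2 : ∑' (p : ℕ × ℕ), f (i p) = ∑' q, f q := hinj.tsum_eq hsupp
  have h3 : ∀ p : ℕ × ℕ, f (i p) = a p.2 * b (p.2 + p.1) := by
    intro p; simp [hf, hi]
  calc ∑' k, ∑' n, a n * b (n + k) = ∑' (p : ℕ × ℕ), a p.2 * b (p.2 + p.1) := by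
        rw [ENNReal.tsum_prod']
      _ = ∑' (p : ℕ × ℕ), f (i p) := by simp_rw [h3]
      _ = ∑' q, f q := h2
      _ = ∑' m, ∑' n, f (m, n) := ENNReal.tsum_prod'
      _ = ∑' m, (∑ j ∈ Finset.range (m + 1), a j) * b m := by
        refine tsum_congr fun m => ?_
        rw [tsum_eq_sum (s := Finset.range (m + 1))
          (fun n hn => by simp [hf, Finset.mem_range] at hn ⊢; omega)]
        rw [Finset.sum_mul]
        refine Finset.sum_congr rfl fun n hn => ?_
        rw [Finset.mem_range] at hn
        simp [hf, Nat.lt_succ_iff.mp hn]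

lemma tsum_cseq (r : ℕ → ℝ≥0) (hr0 : r 0 = 1) (x : X) :
    ∑' k, cseq P A r k x
      = retE P A (fun n => ∑ k ∈ Finset.range (n + 1), (r k : ℝ≥0∞)) x := by
  unfold cseq retE
  rw [ENNReal.tsum_add]
  have key := tsum_shift_mul (fun n => (r (n + 1) : ℝ≥0∞)) (fun m => retF P A (m + 1) x)
  rw [key]
  rw [tsum_eq_zero_add' (f := fun n => (∑ k ∈ Finset.range (n + 1), (r k : ℝ≥0∞)) * retF P A n x)
    ENNReal.summable]
  rw [retF_zero, mul_zero, zero_add, ← ENNReal.tsum_add]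
  refine tsum_congr fun m => ?_
  rw [Finset.sum_range_succ' (fun k => (r k : ℝ≥0∞)) (m + 1), hr0]
  push_cast
  ring

lemma cseq_zero (r : ℕ → ℝ≥0) (x : X) :
    cseq P A r 0 x = P x A + retE P A (fun n => (r n : ℝ≥0∞)) x := by
  unfold cseq retE
  rw [tsum_eq_zero_add' (f := fun n => (r n : ℝ≥0∞) * retF P A n x) ENNReal.summable,
    retF_zero, mul_zero, zero_add, retF_one]
  simp

end MinimalSolutionAux

theorem minimal_solution_rhat
    {X : Type*} [MeasurableSpace X] [MeasurableSpace.CountablyGenerated X]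
    (P : Kernel X X) (hP : ∀ x, P x Set.univ ≤ 1) (ψ : Measure X)
    (hψ : IsMaxIrreducibility P ψ) (r : ℕ → ℝ≥0) (hr : InLambda r)
    (A : Set X) (hA : InBPlus ψ A) :
    (∀ x, retE P A (fun n => ∑ k ∈ Finset.range (n + 1), (r k : ℝ≥0∞)) x
        = (∫⁻ y in Aᶜ, retE P A (fun n => ∑ k ∈ Finset.range (n + 1), (r k : ℝ≥0∞)) y ∂(P x))
          + P x A + retE P A (fun n => (r n : ℝ≥0∞)) x) ∧
    (∀ g : X → ℝ≥0∞, Measurable g →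
      (∀ x, g x = (∫⁻ y in Aᶜ, g y ∂(P x)) + P x A + retE P A (fun n => (r n : ℝ≥0∞)) x) →
      ∀ x, retE P A (fun n => ∑ k ∈ Finset.range (n + 1), (r k : ℝ≥0∞)) x ≤ g x) := by
  obtain ⟨hA', -⟩ := hA
  obtain ⟨-, hr0, -, -⟩ := hr
  have gstar_eq : ∀ x, retE P A (fun n => ∑ k ∈ Finset.range (n + 1), (r k : ℝ≥0∞)) x
      = ∑' k, cseq P A r k x := fun x => (tsum_cseq P A r hr0 x).symm
  constructor
  · intro x
    rw [gstar_eq x, tsum_eq_zero_add' (f := fun k => cseq P A r k x) ENNReal.summable]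
    have h1 : ∑' k, cseq P A r (k + 1) x
        = ∫⁻ y in Aᶜ, retE P A (fun n => ∑ k ∈ Finset.range (n + 1), (r k : ℝ≥0∞)) y ∂(P x) := by
      simp_rw [← lint_cseq P A hA' r _ x]
      rw [← lintegral_tsum fun k => (measurable_cseq P A hA' r k).aemeasurable]
      exact lintegral_congr fun y => (gstar_eq y).symm
    rw [h1, cseq_zero]
    ring
  · intro g hg hgeq x
    have hstep : ∀ N x, ∑ k ∈ Finset.range N, cseq P A r k x ≤ g x := by
      intro N
      induction N with
      | zero => intro x; simp
      | succ N ih =>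
        intro x
        rw [Finset.sum_range_succ']
        have h1 : ∑ k ∈ Finset.range N, cseq P A r (k + 1) x
            = ∫⁻ y in Aᶜ, (∑ k ∈ Finset.range N, cseq P A r k y) ∂(P x) := by
          rw [lintegral_finset_sum _ fun k _ => measurable_cseq P A hA' r k]
          exact Finset.sum_congr rfl fun k _ => (lint_cseq P A hA' r k x).symm
        rw [h1, hgeq x, cseq_zero, ← add_assoc]
        gcongr
        exact ih _
    rw [gstar_eq x]
    exact ENNReal.tsum_le_of_sum_range_le fun N => hstep N x


end MarkovTransience
end

section
/- Assume Φ is ψ-irreducible with (possibly sub-stochastic) transition kernel P, and P_x(τ < ∞) = 1 for all x ∈ X. Then the following are equivalent. (1) Φ is strongly geometric transient, i.e. there exists κ > 1 such that Σ_{n≥1} κ^n P^n(x,X) < ∞ for every x ∈ X. (2) There exists κ > 1 such that E_x[κ^τ] < ∞ for every x ∈ X. (3) There exist a constant λ ∈ (0,1) and a finite function W ≥ 1 such that PW(x) ≤ λ W(x) for all x ∈ X. -/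
open MeasureTheory ProbabilityTheory
open scoped ENNReal NNReal Classical

namespace MarkovTransience

variable {X : Type*} [MeasurableSpace X]

section Aux

variable (P : Kernel X X)

lemma iterP_zero_univ (x : X) : iterP P 0 x Set.univ = 1 := by
  simp [iterP]

lemma iterP_succ_apply (n : ℕ) (x : X) (A : Set X) :
    iterP P (n + 1) x A = ∫⁻ y, iterP P n y A ∂(P x) := rfl

lemma measurable_iterP_univ (n : ℕ) :
    Measurable (fun x => iterP P n x Set.univ) := by
  induction n with
  | zero => simp [iterP]
  | succ n ih =>
      exact (Measure.measurable_lintegral ih).comp P.measurable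

lemma iterP_univ_le_one (hP : ∀ x, P x Set.univ ≤ 1) (n : ℕ) (x : X) :
    iterP P n x Set.univ ≤ 1 := by
  induction n generalizing x with
  | zero => simp [iterP]
  | succ n ih =>
      calc iterP P (n + 1) x Set.univ = ∫⁻ y, iterP P n y Set.univ ∂(P x) := rfl
        _ ≤ ∫⁻ _, 1 ∂(P x) := lintegral_mono fun y => ih y
        _ = P x Set.univ := lintegral_one
        _ ≤ 1 := hP x

lemma iterP_univ_succ_le (hP : ∀ x, P x Set.univ ≤ 1) (n : ℕ) (x : X) :
    iterP P (n + 1) x Set.univ ≤ iterP P n x Set.univ := by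
  induction n generalizing x with
  | zero => simpa [iterP_zero_univ] using iterP_univ_le_one P hP 1 x
  | succ n ih => exact lintegral_mono fun y => ih y

lemma sum_lifeDist (hP : ∀ x, P x Set.univ ≤ 1) (x : X) (n : ℕ) :
    ∑ m ∈ Finset.range n, lifeDist P x m = 1 - iterP P n x Set.univ := by
  induction n with
  | zero => simp [iterP_zero_univ]
  | succ n ih =>
      rw [Finset.sum_range_succ, ih, lifeDist]
      exact tsub_add_tsub_cancel (iterP_univ_le_one P hP n x)
        (iterP_univ_succ_le P hP n x)

/-- Tail-sum formula: `P^n(x, X) = ∑_{m ≥ n} P_x(τ = m)`. -/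
lemma tsum_lifeDist_add (hP : ∀ x, P x Set.univ ≤ 1)
    (x : X) (hx : (∑' n, lifeDist P x n) = 1) (n : ℕ) :
    ∑' m, lifeDist P x (m + n) = iterP P n x Set.univ := by
  have h := Summable.sum_add_tsum_nat_add' (f := lifeDist P x) (k := n) ENNReal.summable
  rw [hx, sum_lifeDist P hP x n] at h
  have h1 : iterP P n x Set.univ ≤ 1 := iterP_univ_le_one P hP n x
  have h2 : (∑' m, lifeDist P x (m + n)) = 1 - (1 - iterP P n x Set.univ) := by
    rw [add_comm] at h
    exact ENNReal.eq_sub_of_add_eq (by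
      exact ne_top_of_le_ne_top ENNReal.one_ne_top tsub_le_self) h
  rw [h2, ENNReal.sub_sub_cancel ENNReal.one_ne_top h1]

lemma lifeDist_le_one (hP : ∀ x, P x Set.univ ≤ 1) (x : X) (n : ℕ) :
    lifeDist P x n ≤ 1 :=
  le_trans tsub_le_self (iterP_univ_le_one P hP n x)

end Aux

theorem stronglyGeomTransient_tfae
    {X : Type*} [MeasurableSpace X] [MeasurableSpace.CountablyGenerated X]
    (P : Kernel X X) (hP : ∀ x, P x Set.univ ≤ 1) (ψ : Measure X)
    (hψ : IsIrreducibility P ψ) (hlife : ∀ x, (∑' n, lifeDist P x n) = 1) :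
    [(∃ κ : ℝ≥0, 1 < κ ∧
        ∀ x, (∑' n, (κ : ℝ≥0∞) ^ (n + 1) * iterP P (n + 1) x Set.univ) < ⊤),
     (∃ κ : ℝ≥0, 1 < κ ∧ ∀ x, lifeE P (fun n => (κ : ℝ≥0∞) ^ n) x < ⊤),
     (∃ lam : ℝ≥0∞, 0 < lam ∧ lam < 1 ∧ ∃ W : X → ℝ≥0∞, Measurable W ∧
        (∀ x, 1 ≤ W x) ∧ (∀ x, W x < ⊤) ∧ ∀ x, act P W x ≤ lam * W x)].TFAE := by
  tfae_have 1 → 2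
  | ⟨κ, hκ, h⟩ => by
    refine ⟨κ, hκ, fun x => ?_⟩
    have hsplit : lifeE P (fun n => (κ : ℝ≥0∞) ^ n) x
        = (κ : ℝ≥0∞) ^ 0 * lifeDist P x 0
          + ∑' n, (κ : ℝ≥0∞) ^ (n + 1) * lifeDist P x (n + 1) :=
      tsum_eq_zero_add' ENNReal.summable
    rw [hsplit]
    have h1 : (κ : ℝ≥0∞) ^ 0 * lifeDist P x 0 ≤ 1 := by
      simpa using lifeDist_le_one P hP x 0
    have h2 : ∑' n, (κ : ℝ≥0∞) ^ (n + 1) * lifeDist P x (n + 1)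
        ≤ ∑' n, (κ : ℝ≥0∞) ^ (n + 1) * iterP P (n + 1) x Set.univ :=
      ENNReal.tsum_le_tsum fun n =>
        mul_le_mul_right (tsub_le_self (b := iterP P (n + 2) x Set.univ)) _
    exact lt_of_le_of_lt (add_le_add h1 h2) (by
      exact ENNReal.add_lt_top.2 ⟨ENNReal.one_lt_top, h x⟩)
  tfae_have 2 → 1
  | ⟨κ, hκ, h⟩ => by
    refine ⟨κ, hκ, fun x => ?_⟩
    have hκ0 : (κ : ℝ≥0∞) ≠ 0 := by
      simpa using (lt_trans zero_lt_one hκ).ne'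
    have hκt : (κ : ℝ≥0∞) ≠ ⊤ := ENNReal.coe_ne_top
    set g : ℕ → ℝ≥0∞ := fun k => (κ : ℝ≥0∞) ^ k * lifeDist P x k with hg
    have hS : (∑' k, g k) < ⊤ := h x
    -- rewrite each term using the tail-sum formula
    have htail : ∀ n : ℕ, iterP P (n + 1) x Set.univ
        = ∑' m, lifeDist P x (m + (n + 1)) := fun n =>
      (tsum_lifeDist_add P hP x (hlife x) (n + 1)).symm
    have hterm : ∀ n m : ℕ,
        (κ : ℝ≥0∞) ^ (n + 1) * lifeDist P x (m + (n + 1))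
          = ((κ : ℝ≥0∞)⁻¹) ^ m * g (m + (n + 1)) := by
      intro n m
      rw [hg]
      have : ((κ : ℝ≥0∞)⁻¹) ^ m * (κ : ℝ≥0∞) ^ (m + (n + 1))
          = (κ : ℝ≥0∞) ^ (n + 1) := by
        rw [pow_add, ← mul_assoc, ← mul_pow, ENNReal.inv_mul_cancel hκ0 hκt,
          one_pow, one_mul]
      rw [← mul_assoc, this]
    have key : ∑' n, (κ : ℝ≥0∞) ^ (n + 1) * iterP P (n + 1) x Set.univ
        = ∑' m, ((κ : ℝ≥0∞)⁻¹) ^ m * ∑' n, g (n + (m + 1)) := by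
      calc ∑' n, (κ : ℝ≥0∞) ^ (n + 1) * iterP P (n + 1) x Set.univ
          = ∑' n, ∑' m, (κ : ℝ≥0∞) ^ (n + 1) * lifeDist P x (m + (n + 1)) := by
            refine tsum_congr fun n => ?_
            rw [htail n, ENNReal.tsum_mul_left]
        _ = ∑' n, ∑' m, ((κ : ℝ≥0∞)⁻¹) ^ m * g (m + (n + 1)) := by
            exact tsum_congr fun n => tsum_congr fun m => hterm n m
        _ = ∑' m, ∑' n, ((κ : ℝ≥0∞)⁻¹) ^ m * g (m + (n + 1)) := ENNReal.tsum_comm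
        _ = ∑' m, ((κ : ℝ≥0∞)⁻¹) ^ m * ∑' n, g (n + (m + 1)) := by
            refine tsum_congr fun m => ?_
            rw [ENNReal.tsum_mul_left]
            congr 1
            exact tsum_congr fun n => by rw [show m + (n + 1) = n + (m + 1) by omega]
    have hinv1 : (κ : ℝ≥0∞)⁻¹ < 1 := ENNReal.inv_lt_one.2 (by exact_mod_cast hκ)
    have hbound : ∀ m : ℕ, (∑' n, g (n + (m + 1))) ≤ ∑' k, g k := fun m =>
      calc (∑' n, g (n + (m + 1)))
          ≤ ∑ i ∈ Finset.range (m + 1), g i + ∑' n, g (n + (m + 1)) := le_add_self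
        _ = ∑' k, g k := Summable.sum_add_tsum_nat_add' (f := g) (k := m + 1) ENNReal.summable
    calc ∑' n, (κ : ℝ≥0∞) ^ (n + 1) * iterP P (n + 1) x Set.univ
        = ∑' m, ((κ : ℝ≥0∞)⁻¹) ^ m * ∑' n, g (n + (m + 1)) := key
      _ ≤ ∑' m, ((κ : ℝ≥0∞)⁻¹) ^ m * ∑' k, g k :=
          ENNReal.tsum_le_tsum fun m => mul_le_mul_right (hbound m) _
      _ = (∑' m, ((κ : ℝ≥0∞)⁻¹) ^ m) * ∑' k, g k := by rw [ENNReal.tsum_mul_right]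
      _ = (1 - (κ : ℝ≥0∞)⁻¹)⁻¹ * ∑' k, g k := by rw [ENNReal.tsum_geometric]
      _ < ⊤ := ENNReal.mul_lt_top
          (ENNReal.inv_lt_top.2 (tsub_pos_iff_lt.2 hinv1)) hS
  tfae_have 1 → 3
  | ⟨κ, hκ, h⟩ => by
    have hκ0 : (κ : ℝ≥0∞) ≠ 0 := by
      simpa using (lt_trans zero_lt_one hκ).ne'
    have hκt : (κ : ℝ≥0∞) ≠ ⊤ := ENNReal.coe_ne_top
    set W : X → ℝ≥0∞ := fun x => ∑' n, (κ : ℝ≥0∞) ^ n * iterP P n x Set.univ with hW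
    have hWsplit : ∀ x, W x = 1 + ∑' n, (κ : ℝ≥0∞) ^ (n + 1) * iterP P (n + 1) x Set.univ := by
      intro x
      rw [hW]
      have := tsum_eq_zero_add'
        (f := fun n => (κ : ℝ≥0∞) ^ n * iterP P n x Set.univ) ENNReal.summable
      simpa [iterP_zero_univ] using this
    refine ⟨(κ : ℝ≥0∞)⁻¹, ENNReal.inv_pos.2 hκt,
      ENNReal.inv_lt_one.2 (by exact_mod_cast hκ), W, ?_, ?_, ?_, ?_⟩
    · exact Measurable.ennreal_tsum fun n => (measurable_iterP_univ P n).const_mul _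
    · intro x; rw [hWsplit x]; exact le_self_add
    · intro x
      rw [hWsplit x]
      exact ENNReal.add_lt_top.2 ⟨ENNReal.one_lt_top, h x⟩
    · intro x
      have hact : act P W x = ∑' n, (κ : ℝ≥0∞) ^ n * iterP P (n + 1) x Set.univ := by
        rw [act, hW, lintegral_tsum fun n =>
          ((measurable_iterP_univ P n).const_mul _).aemeasurable]
        exact tsum_congr fun n => by
          rw [lintegral_const_mul _ (measurable_iterP_univ P n), iterP_succ_apply]
      rw [hact, hWsplit x, mul_add]
      calc ∑' n, (κ : ℝ≥0∞) ^ n * iterP P (n + 1) x Set.univ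
          = (κ : ℝ≥0∞)⁻¹ * ∑' n, (κ : ℝ≥0∞) ^ (n + 1) * iterP P (n + 1) x Set.univ := by
            rw [← ENNReal.tsum_mul_left]
            refine tsum_congr fun n => ?_
            have hpow : (κ : ℝ≥0∞)⁻¹ * (κ : ℝ≥0∞) ^ (n + 1) = (κ : ℝ≥0∞) ^ n := by
              rw [pow_succ', ← mul_assoc, ENNReal.inv_mul_cancel hκ0 hκt, one_mul]
            rw [← hpow, mul_assoc]
        _ ≤ (κ : ℝ≥0∞)⁻¹ * 1
            + (κ : ℝ≥0∞)⁻¹ * ∑' n, (κ : ℝ≥0∞) ^ (n + 1) * iterP P (n + 1) x Set.univ :=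
            le_add_self
  tfae_have 3 → 1
  | ⟨lam, hl0, hl1, W, hWm, hW1, hWt, hact⟩ => by
    -- iterate the drift condition
    have hiter : ∀ n x, iterP P n x Set.univ ≤ lam ^ n * W x := by
      intro n
      induction n with
      | zero => intro x; simpa [iterP_zero_univ] using hW1 x
      | succ n ih =>
          intro x
          calc iterP P (n + 1) x Set.univ = ∫⁻ y, iterP P n y Set.univ ∂(P x) := rfl
            _ ≤ ∫⁻ y, lam ^ n * W y ∂(P x) := lintegral_mono fun y => ih y
            _ = lam ^ n * act P W x := lintegral_const_mul _ hWm
            _ ≤ lam ^ n * (lam * W x) := mul_le_mul_right (hact x) _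
            _ = lam ^ (n + 1) * W x := by rw [pow_succ]; ring
    obtain ⟨t, hlt, ht1⟩ := exists_between hl1
    have ht0 : t ≠ 0 := (lt_of_le_of_lt zero_le (lt_of_lt_of_le hl0 hlt.le)).ne'
    have htt : t ≠ ⊤ := (lt_of_lt_of_le ht1 le_top).ne
    have hinv0 : t⁻¹ ≠ 0 := ENNReal.inv_ne_zero.2 htt
    have hinvt : t⁻¹ ≠ ⊤ := ENNReal.inv_ne_top.2 ht0
    refine ⟨(t⁻¹).toNNReal, ?_, fun x => ?_⟩
    · have : (1 : ℝ≥0∞) < t⁻¹ := ENNReal.one_lt_inv.2 ht1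
      rw [← ENNReal.coe_toNNReal hinvt] at this
      exact_mod_cast this
    · have hcoe : ((t⁻¹).toNNReal : ℝ≥0∞) = t⁻¹ := ENNReal.coe_toNNReal hinvt
      set r : ℝ≥0∞ := t⁻¹ * lam with hr
      have hr1 : r < 1 := by
        have : t⁻¹ * lam < t⁻¹ * t := (ENNReal.mul_lt_mul_iff_right hinv0 hinvt).2 hlt
        rwa [ENNReal.inv_mul_cancel ht0 htt] at this
      calc ∑' n, (((t⁻¹).toNNReal : ℝ≥0∞)) ^ (n + 1) * iterP P (n + 1) x Set.univ
          ≤ ∑' n, r ^ (n + 1) * W x := by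
            refine ENNReal.tsum_le_tsum fun n => ?_
            rw [hcoe, hr, mul_pow, mul_assoc]
            exact mul_le_mul_right (hiter (n + 1) x) _
        _ = (∑' n, r ^ (n + 1)) * W x := ENNReal.tsum_mul_right
        _ ≤ (∑' n, r ^ n) * W x :=
            mul_le_mul_left (ENNReal.tsum_le_tsum fun n =>
              pow_le_pow_of_le_one zero_le hr1.le (Nat.le_succ n)) _
        _ = (1 - r)⁻¹ * W x := by rw [ENNReal.tsum_geometric]
        _ < ⊤ := ENNReal.mul_lt_top
            (ENNReal.inv_lt_top.2 (tsub_pos_iff_lt.2 hr1)) (hWt x)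
  tfae_finish

end MarkovTransience
end

section
/- Suppose there exist a set A ∈ B+(X), constants d ∈ [0,∞) and α ∈ (0,1), and a function V ≥ 1 satisfying PV(x) ≤ V(x) − d V^α(x) for all x ∈ A^c. Then for every 0 < η ≤ 1, P V^η(x) ≤ V^η(x) − η d V^{α+η−1}(x) for all x ∈ A^c. -/
open MeasureTheory ProbabilityTheory
open scoped ENNReal NNReal Classical

namespace MarkovTransience

variable {X : Type*} [MeasurableSpace X]

private lemma key_real' {u v η : ℝ} (hu : 1 ≤ u) (hv : 1 ≤ v) (hη0 : 0 < η) (hη1 : η ≤ 1) :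
    u ^ η + η * v ^ η ≤ v ^ η + η * v ^ (η - 1) * u := by
  have hv0 : 0 < v := lt_of_lt_of_le one_pos hv
  have hu0 : 0 ≤ u := le_trans zero_le_one hu
  have hs : -1 ≤ u / v - 1 := by
    have : 0 ≤ u / v := div_nonneg hu0 hv0.le
    linarith
  have hb := rpow_one_add_le_one_add_mul_self hs hη0.le hη1
  rw [add_sub_cancel] at hb
  have hvpow : 0 < v ^ η := Real.rpow_pos_of_pos hv0 η
  have h1 : (u / v) ^ η = u ^ η / v ^ η := Real.div_rpow hu0 hv0.le η
  have h2 : v ^ (η - 1) = v ^ η / v := by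
    rw [Real.rpow_sub hv0, Real.rpow_one]
  have := mul_le_mul_of_nonneg_right hb hvpow.le
  rw [h1, div_mul_cancel₀ _ hvpow.ne'] at this
  rw [h2]
  have h3 : (1 + η * (u / v - 1)) * v ^ η = v ^ η + η * (v ^ η / v) * u - η * v ^ η := by
    field_simp
    ring
  rw [h3] at this
  linarith

private lemma key_enn' {u v : ℝ≥0∞} {η : ℝ} (hu : 1 ≤ u) (hv : 1 ≤ v) (hvt : v ≠ ⊤)
    (hη0 : 0 < η) (hη1 : η ≤ 1) :
    u ^ η + ENNReal.ofReal η * v ^ η ≤ v ^ η + ENNReal.ofReal η * v ^ (η - 1) * u := by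
  rcases eq_or_ne u ⊤ with rfl | hut
  · have hv0 : (0 : ℝ≥0∞) < v := lt_of_lt_of_le zero_lt_one hv
    have h1 : (0 : ℝ≥0∞) < v ^ (η - 1) := ENNReal.rpow_pos hv0 hvt
    have h2 : (0 : ℝ≥0∞) < ENNReal.ofReal η := ENNReal.ofReal_pos.mpr hη0
    have : ENNReal.ofReal η * v ^ (η - 1) * ⊤ = ⊤ := by
      rw [ENNReal.mul_top]
      exact (ENNReal.mul_pos h2.ne' h1.ne').ne'
    rw [this]
    simp
  · have hvη : v ^ η ≠ ⊤ := ENNReal.rpow_ne_top_of_nonneg hη0.le hvt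
    have huη : u ^ η ≠ ⊤ := ENNReal.rpow_ne_top_of_nonneg hη0.le hut
    have hvη1 : v ^ (η - 1) ≠ ⊤ := by
      have hv0 : v ≠ 0 := (lt_of_lt_of_le zero_lt_one hv).ne'
      intro h
      rcases ENNReal.rpow_eq_top_iff.mp h with ⟨h1, _⟩ | ⟨h1, _⟩
      · exact hv0 h1
      · exact hvt h1
    rw [← ENNReal.toReal_le_toReal (by finiteness) (by finiteness)]
    rw [ENNReal.toReal_add huη (by finiteness), ENNReal.toReal_add hvη (by finiteness),
      ENNReal.toReal_mul, ENNReal.toReal_mul, ENNReal.toReal_mul,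
      ← ENNReal.toReal_rpow, ← ENNReal.toReal_rpow, ← ENNReal.toReal_rpow,
      ENNReal.toReal_ofReal hη0.le]
    have hu1 : 1 ≤ u.toReal := by
      rw [← ENNReal.toReal_one]
      exact (ENNReal.toReal_le_toReal (by simp) hut).mpr hu
    have hv1 : 1 ≤ v.toReal := by
      rw [← ENNReal.toReal_one]
      exact (ENNReal.toReal_le_toReal (by simp) hvt).mpr hv
    exact key_real' hu1 hv1 hη0 hη1

theorem drift_power_of_drift
    {X : Type*} [MeasurableSpace X] [MeasurableSpace.CountablyGenerated X]
    (P : Kernel X X) (hP : ∀ x, P x Set.univ ≤ 1) (ψ : Measure X)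
    (hψ : IsMaxIrreducibility P ψ) (A : Set X) (hA : InBPlus ψ A)
    (d : ℝ≥0) (α : ℝ) (hα0 : 0 < α) (hα1 : α < 1)
    (V : X → ℝ≥0∞) (hV : Measurable V) (hV1 : ∀ x, 1 ≤ V x)
    (hdrift : ∀ x ∉ A, act P V x + (d : ℝ≥0∞) * V x ^ α ≤ V x) :
    ∀ η : ℝ, 0 < η → η ≤ 1 →
      ∀ x ∉ A, act P (fun y => V y ^ η) x
        + ENNReal.ofReal η * (d : ℝ≥0∞) * V x ^ (α + η - 1) ≤ V x ^ η := by
  intro η hη0 hη1 x hx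
  rcases eq_or_ne (V x) ⊤ with hat | hat
  · rw [hat, ENNReal.top_rpow_of_pos hη0]
    exact le_top
  set e : ℝ≥0∞ := ENNReal.ofReal η with he
  set a : ℝ≥0∞ := V x with ha
  set m : ℝ≥0∞ := P x Set.univ with hm
  have ha1 : 1 ≤ a := hV1 x
  have ha0 : a ≠ 0 := (lt_of_lt_of_le zero_lt_one ha1).ne'
  have hm1 : m ≤ 1 := hP x
  have hmt : m ≠ ⊤ := ne_top_of_le_ne_top ENNReal.one_ne_top hm1
  have he1 : e ≤ 1 := by
    rw [he, ← ENNReal.ofReal_one]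
    exact ENNReal.ofReal_le_ofReal hη1
  have het : e ≠ ⊤ := ENNReal.ofReal_ne_top
  have haη : a ^ η ≠ ⊤ := ENNReal.rpow_ne_top_of_nonneg hη0.le hat
  have hmeas : Measurable fun y => V y ^ η := hV.pow_const η
  -- Step 1: integrated concavity inequality
  have step1 : act P (fun y => V y ^ η) x + e * a ^ η * m
      ≤ a ^ η * m + e * a ^ (η - 1) * act P V x := by
    have l1 : act P (fun y => V y ^ η) x + e * a ^ η * m
        = ∫⁻ y, (V y ^ η + e * a ^ η) ∂(P x) := by
      rw [lintegral_add_right _ measurable_const, lintegral_const]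
      rfl
    have l2 : a ^ η * m + e * a ^ (η - 1) * act P V x
        = ∫⁻ y, (a ^ η + e * a ^ (η - 1) * V y) ∂(P x) := by
      rw [lintegral_add_right _ (hV.const_mul _), lintegral_const,
        lintegral_const_mul _ hV]
      rfl
    rw [l1, l2]
    exact lintegral_mono fun y => key_enn' (hV1 y) ha1 hat hη0 hη1
  -- Step 2: multiply the drift inequality
  have step2 : e * a ^ (η - 1) * act P V x + e * (d : ℝ≥0∞) * a ^ (α + η - 1)
      ≤ e * a ^ η := by
    have hd := hdrift x hx
    have := mul_le_mul_right hd (e * a ^ (η - 1))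
    calc e * a ^ (η - 1) * act P V x + e * (d : ℝ≥0∞) * a ^ (α + η - 1)
        = e * a ^ (η - 1) * (act P V x + (d : ℝ≥0∞) * a ^ α) := by
          rw [mul_add]
          congr 1
          rw [show (α : ℝ) + η - 1 = (η - 1) + α by ring,
            ENNReal.rpow_add _ _ ha0 hat]
          ring
      _ ≤ e * a ^ (η - 1) * a := this
      _ = e * a ^ η := by
          have h4 : a ^ (η - 1) * a = a ^ η := by
            nth_rewrite 2 [← ENNReal.rpow_one a]
            rw [← ENNReal.rpow_add _ _ ha0 hat]
            norm_num
          rw [mul_assoc, h4]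
  -- Step 3: m + e ≤ 1 + e * m
  have step3 : a ^ η * m + e * a ^ η ≤ a ^ η + e * a ^ η * m := by
    have hme : m + e ≤ 1 + e * m := by
      have h1 : m + (1 - m) = 1 := add_tsub_cancel_of_le hm1
      calc m + e = m + e * (m + (1 - m)) := by rw [h1, mul_one]
        _ = m + e * m + e * (1 - m) := by ring
        _ ≤ m + e * m + 1 * (1 - m) := by
            gcongr
        _ = (m + (1 - m)) + e * m := by ring
        _ = 1 + e * m := by rw [h1]
    calc a ^ η * m + e * a ^ η = a ^ η * (m + e) := by ring
      _ ≤ a ^ η * (1 + e * m) := mul_le_mul_right hme _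
      _ = a ^ η + e * a ^ η * m := by ring
  -- combine
  have main : act P (fun y => V y ^ η) x + e * (d : ℝ≥0∞) * a ^ (α + η - 1)
      + e * a ^ η * m ≤ a ^ η + e * a ^ η * m := by
    calc act P (fun y => V y ^ η) x + e * (d : ℝ≥0∞) * a ^ (α + η - 1) + e * a ^ η * m
        = (act P (fun y => V y ^ η) x + e * a ^ η * m)
            + e * (d : ℝ≥0∞) * a ^ (α + η - 1) := by ring
      _ ≤ (a ^ η * m + e * a ^ (η - 1) * act P V x)
            + e * (d : ℝ≥0∞) * a ^ (α + η - 1) := add_le_add_left step1 _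
      _ = a ^ η * m + (e * a ^ (η - 1) * act P V x
            + e * (d : ℝ≥0∞) * a ^ (α + η - 1)) := by ring
      _ ≤ a ^ η * m + e * a ^ η := add_le_add le_rfl step2
      _ ≤ a ^ η + e * a ^ η * m := step3
  have hfin : e * a ^ η * m ≠ ⊤ := by finiteness
  exact (ENNReal.add_le_add_iff_right hfin).mp main

end MarkovTransience
end

section
/- For the random walk on the half line with increment law Γ satisfying Γ(−∞,0) > 0: if β = ∫ x Γ(dx) > 0 and there exists γ > 0 such that ∫_{(−∞,0)} exp(−γ x) Γ(dx) < ∞, then the chain is geometrically transient. -/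
open MeasureTheory ProbabilityTheory
open scoped ENNReal NNReal Classical

namespace MarkovTransience

variable {X : Type*} [MeasurableSpace X]

/-- Transition kernel of the random walk on the half line:
`P(x, ·)` is the law of `max (0, x + U)` where `U ∼ Γ`. -/
noncomputable def rwKernel (Γ : Measure ℝ) [IsProbabilityMeasure Γ] : Kernel ℝ≥0 ℝ≥0 :=
  Kernel.map ((Kernel.id : Kernel ℝ≥0 ℝ≥0) ×ₖ Kernel.const ℝ≥0 Γ)
    (fun q : ℝ≥0 × ℝ => Real.toNNReal ((q.1 : ℝ) + q.2))

/-- The `n`-step transition law, as a measure. -/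
noncomputable def iterM {Y : Type*} [MeasurableSpace Y] (P : Kernel Y Y) : ℕ → Y → Measure Y
  | 0 => fun x => Measure.dirac x
  | n + 1 => fun x => (P x).bind (iterM P n)

/-- The maximal irreducibility measure `ψ(·) = Σ_n 2^{-n} P^n(0, ·)` of the RWHL. -/
noncomputable def rwPsi (Γ : Measure ℝ) [IsProbabilityMeasure Γ] : Measure ℝ≥0 :=
  Measure.sum fun n => ((2 : ℝ≥0∞) ^ n)⁻¹ • iterM (rwKernel Γ) n 0


section Aux

noncomputable def kiter (P : Kernel X X) : ℕ → Kernel X X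
  | 0 => Kernel.id
  | n + 1 => kiter P n ∘ₖ P

@[simp] lemma kiter_zero (P : Kernel X X) : kiter P 0 = Kernel.id := rfl
@[simp] lemma kiter_succ (P : Kernel X X) (n : ℕ) : kiter P (n + 1) = kiter P n ∘ₖ P := rfl

instance kiter_markov (P : Kernel X X) [IsMarkovKernel P] (n : ℕ) :
    IsMarkovKernel (kiter P n) := by
  induction n with
  | zero => exact inferInstanceAs (IsMarkovKernel (Kernel.id : Kernel X X))
  | succ n ih => exact Kernel.IsMarkovKernel.comp _ _

lemma kiter_add (P : Kernel X X) [IsMarkovKernel P] (n m : ℕ) :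
    kiter P (n + m) = kiter P n ∘ₖ kiter P m := by
  induction m with
  | zero => simp [Kernel.comp_id]
  | succ m ih =>
    rw [show n + (m + 1) = (n + m) + 1 from rfl, kiter_succ, ih, kiter_succ,
      Kernel.comp_assoc]

lemma iterM_eq_kiter (P : Kernel X X) (n : ℕ) : iterM P n = fun x => kiter P n x := by
  induction n with
  | zero => funext x; simp [iterM, Kernel.id_apply]
  | succ n ih =>
    funext x
    show (P x).bind (iterM P n) = kiter P (n + 1) x
    rw [ih, kiter_succ, Kernel.comp_apply]

lemma iterP_eq_kiter (P : Kernel X X) (n : ℕ) {A : Set X} (hA : MeasurableSet A) (x : X) :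
    iterP P n x A = kiter P n x A := by
  induction n generalizing x with
  | zero =>
    show A.indicator (fun _ => 1) x = _
    rw [kiter_zero, Kernel.id_apply, Measure.dirac_apply' x hA]; rfl
  | succ n ih =>
    show ∫⁻ y, iterP P n y A ∂(P x) = _
    rw [kiter_succ, Kernel.comp_apply' _ _ _ hA]
    exact lintegral_congr fun y => ih y

lemma le_kiter_add [MeasurableSingletonClass X] (P : Kernel X X) [IsMarkovKernel P]
    (n m : ℕ) (x x0 : X) {A : Set X} (hA : MeasurableSet A) :
    kiter P m x {x0} * kiter P n x0 A ≤ kiter P (n + m) x A := by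
  rw [kiter_add, Kernel.comp_apply' _ _ _ hA]
  calc kiter P m x {x0} * kiter P n x0 A
      = ∫⁻ y in {x0}, kiter P n y A ∂(kiter P m x) := by
        rw [lintegral_singleton]; ring
    _ ≤ ∫⁻ y, kiter P n y A ∂(kiter P m x) := setLIntegral_le_lintegral _ _

end Aux


section RWHL

variable (Γ : Measure ℝ) [IsProbabilityMeasure Γ]

lemma rw_map_measurable :
    Measurable (fun q : ℝ≥0 × ℝ => Real.toNNReal ((q.1 : ℝ) + q.2)) :=
  (continuous_real_toNNReal.comp
    ((NNReal.continuous_coe.comp continuous_fst).add continuous_snd)).measurable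

instance : IsMarkovKernel (rwKernel Γ) :=
  Kernel.IsMarkovKernel.map _ rw_map_measurable

lemma rwKernel_apply (x : ℝ≥0) :
    rwKernel Γ x = Γ.map (fun u => Real.toNNReal ((x : ℝ) + u)) := by
  rw [rwKernel, Kernel.map_apply _ rw_map_measurable, Kernel.prod_apply,
    Kernel.id_apply, Kernel.const_apply, Measure.dirac_prod,
    Measure.map_map rw_map_measurable measurable_prodMk_left]
  rfl

lemma rwKernel_lintegral (x : ℝ≥0) {f : ℝ≥0 → ℝ≥0∞} (hf : Measurable f) :
    ∫⁻ y, f y ∂(rwKernel Γ x) = ∫⁻ u, f (Real.toNNReal ((x : ℝ) + u)) ∂Γ := by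
  rw [rwKernel_apply]
  exact lintegral_map hf
    (measurable_real_toNNReal.comp (measurable_const.add measurable_id))

end RWHL


section Analytic

open Filter Topology Real


lemma key_bound {γ t u : ℝ} (hγ : 0 < γ) (ht : 0 < t) (ht2 : t ≤ γ / 2) :
    |(Real.exp (-t * u) - 1) / t| ≤
      |u| + (2 / γ) * Set.indicator (Set.Iio 0) (fun v => Real.exp (-γ * v)) u := by
  simp only [neg_mul]
  have hind : 0 ≤ Set.indicator (Set.Iio 0) (fun v => Real.exp (-(γ * v))) u :=
    Set.indicator_nonneg (fun v _ => (Real.exp_pos _).le) u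
  rcases le_or_gt 0 u with hu | hu
  · have h1 : Real.exp (-(t * u)) ≤ 1 := by
      rw [Real.exp_le_one_iff]; nlinarith
    have h2 : 1 - t * u ≤ Real.exp (-(t * u)) := by
      have := Real.add_one_le_exp (-(t * u)); linarith
    rw [abs_div, abs_of_pos ht, div_le_iff₀ ht]
    have habs : |Real.exp (-(t * u)) - 1| = 1 - Real.exp (-(t * u)) := by
      rw [abs_sub_comm, abs_of_nonneg]; linarith
    rw [habs, abs_of_nonneg hu]
    nlinarith [mul_nonneg (mul_nonneg (by positivity : (0:ℝ) ≤ 2 / γ) hind) ht.le]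
  · have hval : Set.indicator (Set.Iio 0) (fun v => Real.exp (-(γ * v))) u
        = Real.exp (-(γ * u)) := Set.indicator_of_mem (show u ∈ Set.Iio 0 from hu) _
    have h1 : 1 ≤ Real.exp (-(t * u)) := by
      rw [Real.one_le_exp_iff]; nlinarith
    have hmul : Real.exp (t * u) * Real.exp (-(t * u)) = 1 := by
      rw [← Real.exp_add]; simp
    have h3 := Real.add_one_le_exp (t * u)
    have h2 : Real.exp (-(t * u)) - 1 ≤ -(t * u) * Real.exp (-(t * u)) := by
      nlinarith [mul_nonneg (by linarith : (0:ℝ) ≤ Real.exp (t * u) - (t * u + 1))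
        (Real.exp_pos (-(t * u))).le]
    have h5 : Real.exp (-(t * u)) ≤ Real.exp (-(γ / 2 * u)) := by
      apply Real.exp_le_exp.2; nlinarith
    have h6 : -u ≤ (2 / γ) * Real.exp (-(γ / 2 * u)) := by
      have hd := Real.add_one_le_exp (-(γ / 2 * u))
      have hstep : -(γ / 2 * u) ≤ Real.exp (-(γ / 2 * u)) := by linarith
      calc -u = (2 / γ) * (-(γ / 2 * u)) := by field_simp
        _ ≤ (2 / γ) * Real.exp (-(γ / 2 * u)) :=
            mul_le_mul_of_nonneg_left hstep (by positivity)
    have hexpand : Real.exp (-(γ / 2 * u)) * Real.exp (-(γ / 2 * u)) = Real.exp (-(γ * u)) := by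
      rw [← Real.exp_add]; ring_nf
    rw [abs_div, abs_of_pos ht, div_le_iff₀ ht,
      abs_of_nonneg (by linarith : (0:ℝ) ≤ Real.exp (-(t * u)) - 1)]
    have h7 : Real.exp (-(t * u)) - 1 ≤ t * ((2 / γ) * Real.exp (-(γ * u))) := by
      calc Real.exp (-(t * u)) - 1 ≤ -(t * u) * Real.exp (-(t * u)) := h2
        _ = t * ((-u) * Real.exp (-(t * u))) := by ring
        _ ≤ t * ((2 / γ) * Real.exp (-(γ / 2 * u)) * Real.exp (-(t * u))) := by
            apply mul_le_mul_of_nonneg_left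
              (mul_le_mul_of_nonneg_right h6 (Real.exp_pos _).le) ht.le
        _ ≤ t * ((2 / γ) * Real.exp (-(γ / 2 * u)) * Real.exp (-(γ / 2 * u))) := by
            apply mul_le_mul_of_nonneg_left
              (mul_le_mul_of_nonneg_left h5 (by positivity)) ht.le
        _ = t * ((2 / γ) * Real.exp (-(γ * u))) := by rw [mul_assoc, hexpand]
    rw [hval]
    nlinarith [abs_nonneg u]

lemma exists_mgf_lt_one (Γ : Measure ℝ) [IsProbabilityMeasure Γ]
    (hβ : 0 < ∫ x, x ∂Γ) {γ : ℝ} (hγ : 0 < γ)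
    (hexp : (∫⁻ x in Set.Iio 0, ENNReal.ofReal (Real.exp (-γ * x)) ∂Γ) < ⊤) :
    ∃ t : ℝ, 0 < t ∧ (∫⁻ u, ENNReal.ofReal (Real.exp (-t * u)) ∂Γ) < 1 := by
  have hInt : Integrable (fun x : ℝ => x) Γ := by
    by_contra h
    rw [integral_undef h] at hβ
    exact lt_irrefl _ hβ
  have hmeasG : Measurable fun u : ℝ => Real.exp (-γ * u) := by fun_prop
  have hIntG : IntegrableOn (fun u => Real.exp (-γ * u)) (Set.Iio 0) Γ := by
    refine ⟨hmeasG.aestronglyMeasurable.restrict, ?_⟩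
    rw [hasFiniteIntegral_iff_ofReal (ae_of_all _ fun u => (Real.exp_pos _).le)]
    exact hexp
  have hIndInt : Integrable ((Set.Iio 0).indicator fun u => Real.exp (-γ * u)) Γ := by
    rwa [integrable_indicator_iff measurableSet_Iio]
  set bound : ℝ → ℝ :=
    fun u => |u| + (2 / γ) * (Set.Iio 0).indicator (fun v => Real.exp (-γ * v)) u with hbdef
  have hbound : Integrable bound Γ := hInt.abs.add (hIndInt.const_mul _)
  set t : ℕ → ℝ := fun k => γ / (2 * (k + 1)) with htdef
  have htpos : ∀ k, 0 < t k := fun k => by positivity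
  have htle : ∀ k, t k ≤ γ / 2 := by
    intro k
    rw [htdef]
    apply div_le_div_of_nonneg_left hγ.le (by norm_num)
    have : (0:ℝ) ≤ (k:ℝ) := Nat.cast_nonneg k
    linarith
  set F : ℕ → ℝ → ℝ := fun k u => (Real.exp (-t k * u) - 1) / t k with hFdef
  have hFmeas : ∀ k, AEStronglyMeasurable (F k) Γ := fun k => by
    apply Measurable.aestronglyMeasurable; fun_prop
  have hFbound : ∀ k, ∀ᵐ u ∂Γ, ‖F k u‖ ≤ bound u :=
    fun k => ae_of_all _ fun u => key_bound hγ (htpos k) (htle k)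
  have htz : Filter.Tendsto t Filter.atTop (nhdsWithin 0 {x : ℝ | x ≠ 0}) := by
    rw [tendsto_nhdsWithin_iff]
    constructor
    · have hteq : t = fun k : ℕ => (γ / 2) * (1 / ((k : ℝ) + 1)) := by
        funext k
        rw [htdef]
        have : ((k:ℝ) + 1) ≠ 0 := by positivity
        field_simp
      rw [hteq]
      simpa using tendsto_one_div_add_atTop_nhds_zero_nat.const_mul (γ / 2)
    · exact Filter.Eventually.of_forall fun k => (htpos k).ne'
  have hlim : ∀ᵐ u ∂Γ, Filter.Tendsto (fun k => F k u) Filter.atTop (𝓝 (-u)) := by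
    refine ae_of_all _ fun u => ?_
    have hd : HasDerivAt (fun s : ℝ => Real.exp (s * (-u))) (-u) 0 := by
      have h1 : HasDerivAt (fun s : ℝ => s * (-u)) (-u) 0 := hasDerivAt_mul_const (-u)
      simpa using h1.exp
    have hslope := (hasDerivAt_iff_tendsto_slope.mp hd).comp htz
    convert hslope using 2 with k
    rw [Function.comp_apply, slope_def_field, hFdef]
    simp only [zero_mul, Real.exp_zero, sub_zero]
    ring_nf
  have hconv := tendsto_integral_of_dominated_convergence bound hFmeas hbound hFbound hlim
  have hlimval : (∫ u, -u ∂Γ) < 0 := by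
    rw [integral_neg]; linarith
  obtain ⟨k, hk⟩ := (hconv.eventually_lt_const hlimval).exists
  refine ⟨t k, htpos k, ?_⟩
  have hFint : Integrable (F k) Γ := by
    refine hbound.mono (hFmeas k) (ae_of_all _ fun u => ?_)
    exact le_trans (key_bound hγ (htpos k) (htle k)) (le_abs_self _)
  have hfun : (fun u => Real.exp (-t k * u)) = fun u => t k * F k u + 1 := by
    funext u
    rw [hFdef]
    field_simp
    rw [mul_div_cancel_left₀ _ (htpos k).ne']; ring
  have hexpInt : Integrable (fun u => Real.exp (-t k * u)) Γ := by
    rw [hfun]; exact (hFint.const_mul _).add (integrable_const 1)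
  have hIlt : (∫ u, Real.exp (-t k * u) ∂Γ) < 1 := by
    rw [hfun, integral_add (hFint.const_mul _) (integrable_const 1), integral_const_mul,
      integral_const, probReal_univ]
    simp only [ENNReal.toReal_one, smul_eq_mul, one_mul]
    nlinarith [htpos k]
  rw [← ofReal_integral_eq_lintegral_ofReal hexpInt (ae_of_all _ fun u => (Real.exp_pos _).le)]
  exact ENNReal.ofReal_lt_one.2 hIlt

end Analytic

section Drift

variable (Γ : Measure ℝ) [IsProbabilityMeasure Γ]

lemma kiter_Iic_le {t : ℝ} (ht : 0 < t) (n : ℕ) (x M : ℝ≥0) :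
    kiter (rwKernel Γ) n x (Set.Iic M) ≤
      ENNReal.ofReal (Real.exp (t * ((M : ℝ) - (x : ℝ)))) *
        (∫⁻ u, ENNReal.ofReal (Real.exp (-t * u)) ∂Γ) ^ n := by
  set lam := ∫⁻ u, ENNReal.ofReal (Real.exp (-t * u)) ∂Γ with hlamdef
  have hmeas1 : Measurable fun y : ℝ≥0 => ENNReal.ofReal (Real.exp (t * ((M : ℝ) - y))) := by
    fun_prop
  have hmeas2 : Measurable fun u : ℝ => ENNReal.ofReal (Real.exp (-t * u)) := by fun_prop
  induction n generalizing x with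
  | zero =>
    rw [kiter_zero, Kernel.id_apply, pow_zero, mul_one,
      Measure.dirac_apply' _ measurableSet_Iic]
    by_cases hx : x ∈ Set.Iic M
    · rw [Set.indicator_of_mem hx]
      rw [Set.mem_Iic, ← NNReal.coe_le_coe] at hx
      have h1 : (1 : ℝ) ≤ Real.exp (t * ((M : ℝ) - x)) := by
        rw [Real.one_le_exp_iff]
        nlinarith
      calc (1 : ℝ≥0∞) = ENNReal.ofReal 1 := by simp
        _ ≤ _ := ENNReal.ofReal_le_ofReal h1
    · rw [Set.indicator_of_notMem hx]; exact zero_le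
  | succ n ih =>
    rw [kiter_succ, Kernel.comp_apply' _ _ _ measurableSet_Iic]
    calc ∫⁻ y, kiter (rwKernel Γ) n y (Set.Iic M) ∂(rwKernel Γ x)
        ≤ ∫⁻ y, ENNReal.ofReal (Real.exp (t * ((M : ℝ) - y))) * lam ^ n ∂(rwKernel Γ x) :=
          lintegral_mono fun y => ih y
      _ = (∫⁻ y, ENNReal.ofReal (Real.exp (t * ((M : ℝ) - y))) ∂(rwKernel Γ x)) * lam ^ n :=
          lintegral_mul_const _ hmeas1
      _ = (∫⁻ u, ENNReal.ofReal (Real.exp (t * ((M : ℝ) - Real.toNNReal ((x : ℝ) + u)))) ∂Γ)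
            * lam ^ n := by rw [rwKernel_lintegral Γ x hmeas1]
      _ ≤ (∫⁻ u, ENNReal.ofReal (Real.exp (t * ((M : ℝ) - (x : ℝ))) * Real.exp (-t * u)) ∂Γ)
            * lam ^ n := by
          apply mul_le_mul_left
          apply lintegral_mono
          intro u
          apply ENNReal.ofReal_le_ofReal
          rw [← Real.exp_add]
          apply Real.exp_le_exp.2
          have h := Real.le_coe_toNNReal ((x : ℝ) + u)
          nlinarith
      _ = ENNReal.ofReal (Real.exp (t * ((M : ℝ) - (x : ℝ)))) * lam * lam ^ n := by
          simp_rw [ENNReal.ofReal_mul (Real.exp_pos _).le]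
          rw [lintegral_const_mul _ hmeas2]
      _ = ENNReal.ofReal (Real.exp (t * ((M : ℝ) - (x : ℝ)))) * lam ^ (n + 1) := by
          rw [pow_succ]; ring

lemma exists_eps (hneg : 0 < Γ (Set.Iio 0)) :
    ∃ ε : ℝ, 0 < ε ∧ 0 < Γ (Set.Iic (-ε)) := by
  by_contra h
  push_neg at h
  have hz : ∀ n : ℕ, Γ (Set.Iic (-(1 / ((n : ℝ) + 1)))) = 0 := fun n =>
    le_antisymm (h _ (by positivity)) (zero_le)
  have hsub : Set.Iio (0 : ℝ) ⊆ ⋃ n : ℕ, Set.Iic (-(1 / ((n : ℝ) + 1))) := by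
    intro u hu
    rw [Set.mem_Iio] at hu
    obtain ⟨n, hn⟩ := exists_nat_one_div_lt (show (0 : ℝ) < -u by linarith)
    refine Set.mem_iUnion.2 ⟨n, ?_⟩
    rw [Set.mem_Iic]
    linarith
  have := (measure_mono hsub).trans_eq (measure_iUnion_null hz)
  exact absurd this (by simpa using hneg.ne')

lemma reach_zero_aux {ε : ℝ} (hε : 0 < ε) :
    ∀ m : ℕ, ∀ x : ℝ≥0, (x : ℝ) ≤ m * ε →
      Γ (Set.Iic (-ε)) ^ m ≤ kiter (rwKernel Γ) m x {0} := by
  intro m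
  induction m with
  | zero =>
    intro x hx
    have hx0 : x = 0 := by
      have : (x : ℝ) ≤ 0 := by simpa using hx
      exact le_antisymm (by exact_mod_cast this) (zero_le)
    subst hx0
    rw [kiter_zero, Kernel.id_apply, pow_zero,
      Measure.dirac_apply' _ (measurableSet_singleton 0),
      Set.indicator_of_mem (Set.mem_singleton 0)]
    simp
  | succ m ih =>
    intro x hx
    rw [kiter_succ, Kernel.comp_apply' _ _ _ (measurableSet_singleton 0), pow_succ]
    set c : ℝ≥0 := Real.toNNReal ((x : ℝ) - ε) with hcdef
    have hc : ∀ y : ℝ≥0, y ∈ Set.Iic c → (y : ℝ) ≤ m * ε := by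
      intro y hy
      rw [Set.mem_Iic, ← NNReal.coe_le_coe] at hy
      have h1 : (c : ℝ) = max ((x : ℝ) - ε) 0 := Real.coe_toNNReal' _
      have h2 : (x : ℝ) - ε ≤ m * ε := by
        push_cast at hx ⊢
        linarith
      have h3 : (0 : ℝ) ≤ m * ε := by positivity
      rcases max_cases ((x : ℝ) - ε) 0 with ⟨he, _⟩ | ⟨he, _⟩ <;> rw [he] at h1 <;> linarith
    have h1 : Γ (Set.Iic (-ε)) ≤ rwKernel Γ x (Set.Iic c) := by
      rw [rwKernel_apply, Measure.map_apply
        (by fun_prop : Measurable fun u : ℝ => Real.toNNReal ((x : ℝ) + u)) measurableSet_Iic]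
      apply measure_mono
      intro u hu
      rw [Set.mem_Iic] at hu
      show Real.toNNReal ((x : ℝ) + u) ∈ Set.Iic c
      rw [Set.mem_Iic, hcdef]
      exact Real.toNNReal_le_toNNReal (by linarith)
    calc Γ (Set.Iic (-ε)) ^ m * Γ (Set.Iic (-ε))
        ≤ Γ (Set.Iic (-ε)) ^ m * rwKernel Γ x (Set.Iic c) := mul_le_mul_right h1 _
      _ = ∫⁻ _ in Set.Iic c, Γ (Set.Iic (-ε)) ^ m ∂(rwKernel Γ x) := by
          rw [setLIntegral_const]
      _ ≤ ∫⁻ y in Set.Iic c, kiter (rwKernel Γ) m y {0} ∂(rwKernel Γ x) :=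
          setLIntegral_mono (Kernel.measurable_coe _ (measurableSet_singleton 0))
            fun y hy => ih y (hc y hy)
      _ ≤ ∫⁻ y, kiter (rwKernel Γ) m y {0} ∂(rwKernel Γ x) := setLIntegral_le_lintegral _ _

lemma rwPsi_apply {A : Set ℝ≥0} (hA : MeasurableSet A) :
    rwPsi Γ A = ∑' n, ((2 : ℝ≥0∞) ^ n)⁻¹ * kiter (rwKernel Γ) n 0 A := by
  rw [rwPsi, Measure.sum_apply _ hA]
  congr 1
  funext n
  rw [Measure.smul_apply, iterM_eq_kiter, smul_eq_mul]

lemma reach_zero (hneg : 0 < Γ (Set.Iio 0)) (x : ℝ≥0) :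
    ∃ m : ℕ, 1 ≤ m ∧ 0 < kiter (rwKernel Γ) m x {0} := by
  obtain ⟨ε, hε, hp⟩ := exists_eps Γ hneg
  refine ⟨⌈(x : ℝ) / ε⌉₊ + 1, le_add_self, ?_⟩
  have hx : (x : ℝ) ≤ (⌈(x : ℝ) / ε⌉₊ + 1 : ℕ) * ε := by
    have h1 : (x : ℝ) / ε ≤ ⌈(x : ℝ) / ε⌉₊ := Nat.le_ceil _
    have h2 : (x : ℝ) ≤ (⌈(x : ℝ) / ε⌉₊ : ℝ) * ε := by
      rw [← div_le_iff₀ hε] at *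
      exact h1
    push_cast
    nlinarith
  exact lt_of_lt_of_le (ENNReal.pow_pos hp _) (reach_zero_aux Γ hε _ x hx)

lemma rwPsi_irred (hneg : 0 < Γ (Set.Iio 0)) :
    IsIrreducibility (rwKernel Γ) (rwPsi Γ) := by
  have hzero : 0 < rwPsi Γ {0} := by
    rw [rwPsi_apply Γ (measurableSet_singleton 0)]
    refine lt_of_lt_of_le ?_ (ENNReal.le_tsum 0)
    rw [kiter_zero, Kernel.id_apply, pow_zero, inv_one, one_mul,
      Measure.dirac_apply' _ (measurableSet_singleton 0),
      Set.indicator_of_mem (Set.mem_singleton 0)]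
    exact zero_lt_one
  refine ⟨?_, ?_, ?_⟩
  · intro h
    rw [h] at hzero
    simp at hzero
  · haveI : IsFiniteMeasure (rwPsi Γ) := by
      constructor
      rw [rwPsi_apply Γ MeasurableSet.univ]
      have heq : ∀ n : ℕ, ((2 : ℝ≥0∞) ^ n)⁻¹ * kiter (rwKernel Γ) n 0 Set.univ
          = (2 : ℝ≥0∞)⁻¹ ^ n := by
        intro n
        rw [measure_univ, mul_one, ENNReal.inv_pow]
      rw [tsum_congr heq, ENNReal.tsum_geometric, ENNReal.one_sub_inv_two, inv_inv]
      exact (by simp : (2 : ℝ≥0∞) < ⊤)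
    infer_instance
  · intro A hA hpos x
    have hex : ∃ n, 0 < kiter (rwKernel Γ) n 0 A := by
      by_contra hc
      push_neg at hc
      have : rwPsi Γ A = 0 := by
        rw [rwPsi_apply Γ hA, ENNReal.tsum_eq_zero]
        intro n
        rw [le_antisymm (hc n) (zero_le), mul_zero]
      rw [this] at hpos
      exact lt_irrefl _ hpos
    obtain ⟨n, hn⟩ := hex
    obtain ⟨m, hm1, hm⟩ := reach_zero Γ hneg x
    have hchain : kiter (rwKernel Γ) m x {0} * kiter (rwKernel Γ) n 0 A
        ≤ kiter (rwKernel Γ) (n + m) x A := le_kiter_add _ n m x 0 hA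
    have hpos2 : 0 < kiter (rwKernel Γ) (n + m) x A :=
      lt_of_lt_of_le (ENNReal.mul_pos hm.ne' hn.ne') hchain
    have hidx : n + m - 1 + 1 = n + m := by omega
    refine lt_of_lt_of_le ?_ (ENNReal.le_tsum (n + m - 1))
    rw [iterP_eq_kiter _ _ hA, hidx]
    exact hpos2

lemma rwPsi_max (ψ' : Measure ℝ≥0) (h : IsIrreducibility (rwKernel Γ) ψ') :
    ψ' ≪ rwPsi Γ := by
  obtain ⟨hne, hsf, hirr⟩ := h
  intro s hs
  set B := toMeasurable (rwPsi Γ) s with hBdef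
  have hBm : MeasurableSet B := measurableSet_toMeasurable _ _
  have hB0 : rwPsi Γ B = 0 := by rw [hBdef, measure_toMeasurable]; exact hs
  have hψ'B : ψ' B = 0 := by
    by_contra h
    have hpos : 0 < ψ' B := pos_iff_ne_zero.2 h
    have h2 := hirr B hBm hpos 0
    have hex : ∃ k, 0 < iterP (rwKernel Γ) (k + 1) 0 B := by
      by_contra hc
      push_neg at hc
      rw [ENNReal.tsum_eq_zero.2 (fun k => le_antisymm (hc k) (zero_le))] at h2
      exact lt_irrefl _ h2
    obtain ⟨k, hk⟩ := hex
    rw [iterP_eq_kiter _ _ hBm] at hk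
    have hterm : 0 < ((2 : ℝ≥0∞) ^ (k + 1))⁻¹ * kiter (rwKernel Γ) (k + 1) 0 B := by
      apply ENNReal.mul_pos _ hk.ne'
      simp [ENNReal.pow_ne_top]
    have : 0 < rwPsi Γ B := by
      rw [rwPsi_apply Γ hBm]
      exact lt_of_lt_of_le hterm (ENNReal.le_tsum (k + 1))
    rw [hB0] at this
    exact lt_irrefl _ this
  exact le_antisymm ((measure_mono (subset_toMeasurable _ _)).trans hψ'B.le) (zero_le)

end Drift

theorem rwhl_geomTransient
    (Γ : Measure ℝ) [IsProbabilityMeasure Γ] (hneg : 0 < Γ (Set.Iio 0))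
    (hβ : 0 < ∫ x, x ∂Γ)
    (hexp : ∃ γ : ℝ, 0 < γ ∧
      (∫⁻ x in Set.Iio 0, ENNReal.ofReal (Real.exp (-γ * x)) ∂Γ) < ⊤) :
    GeomTransient (rwKernel Γ) (rwPsi Γ) := by
  obtain ⟨γ, hγ, hexpfin⟩ := hexp
  obtain ⟨t, ht, hlam⟩ := exists_mgf_lt_one Γ hβ hγ hexpfin
  refine ⟨⟨rwPsi_irred Γ hneg, fun ψ' h => rwPsi_max Γ ψ' h⟩, ∅,
    fun i => Set.Iic (i : ℝ≥0), measure_empty, ?_, ?_⟩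
  · rw [Set.empty_union, Set.eq_univ_iff_forall]
    intro x
    refine Set.mem_iUnion.2 ⟨⌈(x : ℝ)⌉₊, ?_⟩
    rw [Set.mem_Iic, ← NNReal.coe_le_coe]
    push_cast
    exact Nat.le_ceil _
  · intro i
    constructor
    · refine ⟨measurableSet_Iic, ?_⟩
      rw [rwPsi_apply Γ measurableSet_Iic]
      refine lt_of_lt_of_le ?_ (ENNReal.le_tsum 0)
      rw [kiter_zero, Kernel.id_apply, pow_zero, inv_one, one_mul,
        Measure.dirac_apply' _ measurableSet_Iic,
        Set.indicator_of_mem (Set.mem_Iic.2 (zero_le))]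
      simp
    · set lam := ∫⁻ u, ENNReal.ofReal (Real.exp (-t * u)) ∂Γ with hlamdef
      have hlamtop : lam ≠ ⊤ := (hlam.trans ENNReal.one_lt_top).ne
      set l : ℝ≥0 := lam.toNNReal with hldef
      have hl : (l : ℝ≥0∞) = lam := ENNReal.coe_toNNReal hlamtop
      have hl1 : l < 1 := by
        rw [← ENNReal.coe_lt_one_iff, hl]
        exact hlam
      set κ : ℝ≥0 := ((l + 1) / 2)⁻¹ with hκdef
      have hden : 0 < (l + 1) / 2 := by positivity
      have hlt1 : (l + 1) / 2 < 1 := by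
        rw [div_lt_one (by norm_num : (0 : ℝ≥0) < 2)]
        calc l + 1 < 1 + 1 := add_lt_add_left hl1 1
          _ = 2 := one_add_one_eq_two
      have hκ1 : 1 < κ := by
        rw [hκdef, one_lt_inv_iff₀]
        exact ⟨hden, hlt1⟩
      have hr : (κ : ℝ≥0∞) * lam < 1 := by
        rw [← hl, ← ENNReal.coe_mul, ENNReal.coe_lt_one_iff, ← NNReal.coe_lt_coe, hκdef]
        push_cast
        have hl1' : (l : ℝ) < 1 := hl1
        have hl0 : (0 : ℝ) ≤ l := l.coe_nonneg
        have hpos : (0 : ℝ) < (l : ℝ) + 1 := by linarith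
        have h2 : (((l : ℝ) + 1) / 2)⁻¹ * (l : ℝ) = 2 * l / ((l : ℝ) + 1) := by
          field_simp
        rw [h2, div_lt_one hpos]
        linarith
      refine ⟨κ, hκ1, ?_⟩
      have hbound : ∀ x ∈ Set.Iic (i : ℝ≥0),
          (∑' n, (κ : ℝ≥0∞) ^ (n + 1) * iterP (rwKernel Γ) (n + 1) x (Set.Iic (i : ℝ≥0)))
            ≤ ENNReal.ofReal (Real.exp (t * ((i : ℝ≥0) : ℝ))) * (1 - (κ : ℝ≥0∞) * lam)⁻¹ := by
        intro x hx
        rw [Set.mem_Iic, ← NNReal.coe_le_coe] at hx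
        calc (∑' n, (κ : ℝ≥0∞) ^ (n + 1) * iterP (rwKernel Γ) (n + 1) x (Set.Iic (i : ℝ≥0)))
            = ∑' n, (κ : ℝ≥0∞) ^ (n + 1) * kiter (rwKernel Γ) (n + 1) x (Set.Iic (i : ℝ≥0)) :=
              tsum_congr fun n => by rw [iterP_eq_kiter _ _ measurableSet_Iic]
          _ ≤ ∑' n, ENNReal.ofReal (Real.exp (t * ((i : ℝ≥0) : ℝ)))
                * ((κ : ℝ≥0∞) * lam) ^ (n + 1) := by
              apply ENNReal.tsum_le_tsum
              intro n
              calc (κ : ℝ≥0∞) ^ (n + 1) * kiter (rwKernel Γ) (n + 1) x (Set.Iic (i : ℝ≥0))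
                  ≤ (κ : ℝ≥0∞) ^ (n + 1) *
                      (ENNReal.ofReal (Real.exp (t * (((i : ℝ≥0) : ℝ) - (x : ℝ))))
                        * lam ^ (n + 1)) :=
                    mul_le_mul_right (kiter_Iic_le Γ ht (n + 1) x (i : ℝ≥0)) _
                _ ≤ (κ : ℝ≥0∞) ^ (n + 1) *
                      (ENNReal.ofReal (Real.exp (t * ((i : ℝ≥0) : ℝ))) * lam ^ (n + 1)) := by
                    apply mul_le_mul_right
                    apply mul_le_mul_left
                    apply ENNReal.ofReal_le_ofReal
                    apply Real.exp_le_exp.2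
                    have hx0 : (0 : ℝ) ≤ (x : ℝ) := x.coe_nonneg
                    nlinarith
                _ = ENNReal.ofReal (Real.exp (t * ((i : ℝ≥0) : ℝ)))
                      * ((κ : ℝ≥0∞) * lam) ^ (n + 1) := by
                    rw [mul_pow]
                    ring
          _ = ENNReal.ofReal (Real.exp (t * ((i : ℝ≥0) : ℝ)))
                * ∑' n, ((κ : ℝ≥0∞) * lam) ^ (n + 1) := ENNReal.tsum_mul_left
          _ ≤ ENNReal.ofReal (Real.exp (t * ((i : ℝ≥0) : ℝ)))
                * ∑' n, ((κ : ℝ≥0∞) * lam) ^ n :=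
              mul_le_mul_right (ENNReal.tsum_le_tsum fun n =>
                pow_le_pow_of_le_one (zero_le) hr.le (Nat.le_succ n)) _
          _ = ENNReal.ofReal (Real.exp (t * ((i : ℝ≥0) : ℝ)))
                * (1 - (κ : ℝ≥0∞) * lam)⁻¹ := by rw [ENNReal.tsum_geometric]
      refine lt_of_le_of_lt (iSup₂_le hbound) ?_
      apply ENNReal.mul_lt_top ENNReal.ofReal_lt_top
      rw [ENNReal.inv_lt_top]
      exact tsub_pos_of_lt hr

end MarkovTransience
end
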